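/- arXiv:1602.01149 — 16 statements merged into one kernel-verified Lean document; each statement's English description precedes it below -/
import Mathlib

section
/- Suppose there exist a set A in the family 𝔄 and a receiver i such that K_i ⊆ A and W_i \ A ≠ ∅. Then no weakly-secure index code (deterministic or random) exists: for every length ℓ, every finite key alphabet Y with key pmf p, and every random index code f that is decodable for receiver (K_i, W_i), the security condition fails at (A, j) for every j ∈ W_i \ A. -/
open Matrix

/-- Decodability of a random index code `f` for a receiver with knowledge set `K`
and want set `W`. -/
def Decodable {m ℓ : ℕ} {F Y : Type*} (f : (Fin m → F) → Y → (Fin ℓ → F))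
    (K W : Finset (Fin m)) : Prop :=
  ∃ g : (Fin ℓ → F) → (↥K → F) → (↥W → F),
    ∀ (x : Fin m → F) (y : Y), g (f x y) (fun j => x j.1) = fun j => x j.1

/-- Decodability of a deterministic index code. -/
def DetDecodable {m ℓ : ℕ} {F : Type*} (f : (Fin m → F) → (Fin ℓ → F))
    (K W : Finset (Fin m)) : Prop :=
  ∃ g : (Fin ℓ → F) → (↥K → F) → (↥W → F),
    ∀ x : Fin m → F, g (f x) (fun j => x j.1) = fun j => x j.1

/-- Security condition at `(A, i)` for a random index code with key pmf `p`
(counting form of `H(X_i | f(X,Y), X_A) = H(X_i)`). -/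
def Secure {m ℓ : ℕ} {F Y : Type*} [Fintype Y] (p : Y → NNReal)
    (f : (Fin m → F) → Y → (Fin ℓ → F)) (A : Finset (Fin m)) (i : Fin m) : Prop :=
  ∀ (c : Fin ℓ → F) (z : ↥A → F) (a b : F),
    (∑ y : Y, p y *
      (Nat.card {x : Fin m → F // f x y = c ∧ (∀ j : ↥A, x j.1 = z j) ∧ x i = a} : NNReal)) =
    (∑ y : Y, p y *
      (Nat.card {x : Fin m → F // f x y = c ∧ (∀ j : ↥A, x j.1 = z j) ∧ x i = b} : NNReal))

/-- Security condition at `(A, i)` for a deterministic index code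
(counting form of `H(X_i | f(X), X_A) = H(X_i)`). -/
def DetSecure {m ℓ : ℕ} {F : Type*} (f : (Fin m → F) → (Fin ℓ → F))
    (A : Finset (Fin m)) (i : Fin m) : Prop :=
  ∀ (c : Fin ℓ → F) (z : ↥A → F) (a b : F),
    Nat.card {x : Fin m → F // f x = c ∧ (∀ j : ↥A, x j.1 = z j) ∧ x i = a} =
    Nat.card {x : Fin m → F // f x = c ∧ (∀ j : ↥A, x j.1 = z j) ∧ x i = b}

/-- **Proposition 2.** If there are `A ∈ 𝔄` and a receiver `i` with `K i ⊆ A` and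
`W i \ A ≠ ∅`, then no (deterministic or random) weakly-secure index code exists:
any random index code decodable for receiver `i` fails the security condition at
`(A, j)` for every `j ∈ W i \ A`. -/
theorem no_secure_code_of_knowledge_subset_eavesdropper
    (m n : ℕ) (K W : Fin n → Finset (Fin m))
    (𝔄 : Set (Finset (Fin m))) (A : Finset (Fin m)) (hA : A ∈ 𝔄)
    (i : Fin n) (hK : K i ⊆ A) (hW : (W i \ A).Nonempty)
    (F : Type*) [Field F] [Fintype F]
    (ℓ : ℕ) (Y : Type*) [Fintype Y] (p : Y → NNReal) (hp : (∑ y : Y, p y) = 1)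
    (f : (Fin m → F) → Y → (Fin ℓ → F))
    (hdec : Decodable f (K i) (W i)) :
    ∀ j ∈ W i \ A, ¬ Secure p f A j := by
  obtain ⟨g, hg⟩ := hdec
  intro j hj hsec
  obtain ⟨hjW, hjA⟩ := Finset.mem_sdiff.mp hj
  have hy : ∃ y0, p y0 ≠ 0 := by
    by_contra h
    push_neg at h
    simp [h] at hp
  obtain ⟨y0, hy0⟩ := hy
  set x0 : Fin m → F := fun _ => 0 with hx0
  set c : Fin ℓ → F := f x0 y0 with hc
  set z : ↥A → F := fun _ => 0 with hz
  obtain ⟨b, hb⟩ := exists_ne (0 : F)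
  -- determined value of x j
  have key : ∀ (y : Y) (x : Fin m → F), f x y = c → (∀ k : ↥A, x k.1 = z k) →
      x j = g c (fun k : ↥(K i) => z ⟨k.1, hK k.2⟩) ⟨j, hjW⟩ := by
    intro y x hfx hxa
    have h1 := congrFun (hg x y) ⟨j, hjW⟩
    have h2 : (fun k : ↥(K i) => x k.1) = (fun k : ↥(K i) => z ⟨k.1, hK k.2⟩) := by
      funext k
      exact hxa ⟨k.1, hK k.2⟩
    rw [hfx, h2] at h1
    exact h1.symm
  have ha : (0 : F) = g c (fun k : ↥(K i) => z ⟨k.1, hK k.2⟩) ⟨j, hjW⟩ :=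
    key y0 x0 rfl (fun k => rfl)
  have hsec' := hsec c z 0 b
  have hR : ∀ y : Y,
      Nat.card {x : Fin m → F // f x y = c ∧ (∀ k : ↥A, x k.1 = z k) ∧ x j = b} = 0 := by
    intro y
    rw [Nat.card_eq_zero]
    left
    constructor
    rintro ⟨x, hx1, hx2, hx3⟩
    have h3 := key y x hx1 hx2
    rw [hx3] at h3
    exact hb (h3.trans ha.symm)
  have hRHS : (∑ y : Y, p y *
      (Nat.card {x : Fin m → F // f x y = c ∧ (∀ k : ↥A, x k.1 = z k) ∧ x j = b} : NNReal)) = 0 := by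
    refine Finset.sum_eq_zero fun y _ => ?_
    rw [hR y, Nat.cast_zero, mul_zero]
  have hpos : 0 < Nat.card {x : Fin m → F // f x y0 = c ∧ (∀ k : ↥A, x k.1 = z k) ∧ x j = 0} := by
    apply Nat.card_pos_iff.mpr
    exact ⟨⟨⟨x0, rfl, fun k => rfl, rfl⟩⟩, inferInstance⟩
  have hLHS : 0 < (∑ y : Y, p y *
      (Nat.card {x : Fin m → F // f x y = c ∧ (∀ k : ↥A, x k.1 = z k) ∧ x j = 0} : NNReal)) := by
    refine lt_of_lt_of_le ?_ (Finset.single_le_sum (fun y _ => zero_le) (Finset.mem_univ y0))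
    exact mul_pos (pos_iff_ne_zero.mpr hy0) (by exact_mod_cast hpos)
  rw [hsec', hRHS] at hLHS
  exact lt_irrefl 0 hLHS
end

section
/- Let 0 ≤ t' < t ≤ m − 1. If a random index code f (with key pmf p) satisfies the security condition at (A, i) for every A ⊆ Fin m with |A| = t and every i ∉ A, then it also satisfies the security condition at (A', i) for every A' ⊆ Fin m with |A'| = t' and every i ∉ A'. (Any index code secure against an eavesdropper with t-level access is secure against an eavesdropper with t'-level access for all t' < t.) -/
open Matrix

/-- **Lemma 1.** Any (deterministic or random) index code secure against an
eavesdropper with `t`-level access is also secure against an eavesdropper with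
`t'`-level access for any `t' < t` (here `0 ≤ t' < t ≤ m - 1`). -/
theorem secure_t_level_mono
    (m ℓ : ℕ) (t t' : ℕ) (ht' : t' < t) (ht : t ≤ m - 1) (hm : 1 ≤ m)
    (F : Type*) [Field F] [Fintype F]
    (Y : Type*) [Fintype Y] (p : Y → NNReal) (hp : (∑ y : Y, p y) = 1)
    (f : (Fin m → F) → Y → (Fin ℓ → F))
    (hsec : ∀ A : Finset (Fin m), A.card = t → ∀ i ∉ A, Secure p f A i) :
    ∀ A' : Finset (Fin m), A'.card = t' → ∀ i ∉ A', Secure p f A' i := by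
  
  classical
  have key : ∀ s : ℕ, s + 1 ≤ t →
      (∀ A : Finset (Fin m), A.card = s + 1 → ∀ i ∉ A, Secure p f A i) →
      (∀ A : Finset (Fin m), A.card = s → ∀ i ∉ A, Secure p f A i) := by
    intro s hs hsec1 A hA i hi c z a b
    have hcard : (insert i A).card = s + 1 := by
      rw [Finset.card_insert_of_notMem hi, hA]
    obtain ⟨j, hj⟩ : ∃ j, j ∉ insert i A := by
      by_contra h
      push_neg at h
      have : insert i A = Finset.univ := Finset.eq_univ_iff_forall.2 h
      rw [this, Finset.card_univ, Fintype.card_fin] at hcard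
      omega
    have hjA : j ∉ A := fun h => hj (Finset.mem_insert_of_mem h)
    have hij : i ≠ j := fun h => hj (h ▸ Finset.mem_insert_self i A)
    set B : Finset (Fin m) := insert j A with hBdef
    have hiB : i ∉ B := by
      rw [hBdef, Finset.mem_insert]
      push_neg
      exact ⟨hij, hi⟩
    have hB : B.card = s + 1 := by
      rw [hBdef, Finset.card_insert_of_notMem hjA, hA]
    set z' : F → ↥B → F := fun v k => if h : k.1 ∈ A then z ⟨k.1, h⟩ else v with hz'
    have hdecomp : ∀ (y : Y) (w : F),
        (Nat.card {x : Fin m → F // f x y = c ∧ (∀ k : ↥A, x k.1 = z k) ∧ x i = w}) =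
        ∑ v : F, Nat.card
          {x : Fin m → F // f x y = c ∧ (∀ k : ↥B, x k.1 = z' v k) ∧ x i = w} := by
      intro y w
      have e : {x : Fin m → F // f x y = c ∧ (∀ k : ↥A, x k.1 = z k) ∧ x i = w} ≃
          Σ v : F, {x : Fin m → F // f x y = c ∧ (∀ k : ↥B, x k.1 = z' v k) ∧ x i = w} :=
        { toFun := fun x => ⟨x.1 j, ⟨x.1, x.2.1, by
            intro k
            rcases Finset.mem_insert.1 k.2 with h | h
            · have hk : z' (x.1 j) k = x.1 j := dif_neg (h ▸ hjA)
              rw [hk, h]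
            · have hk : z' (x.1 j) k = z ⟨k.1, h⟩ := dif_pos h
              rw [hk]
              exact x.2.2.1 ⟨k.1, h⟩, x.2.2.2⟩⟩
          invFun := fun s => ⟨s.2.1, s.2.2.1, by
            intro k
            have h1 := s.2.2.2.1 ⟨k.1, Finset.mem_insert_of_mem k.2⟩
            have h2 : z' s.1 ⟨k.1, Finset.mem_insert_of_mem k.2⟩ = z ⟨k.1, k.2⟩ :=
              dif_pos k.2
            rw [h2] at h1
            exact h1, s.2.2.2.2⟩
          left_inv := fun x => rfl
          right_inv := by
            rintro ⟨v, x, hx⟩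
            have hv : x j = v := by
              have h1 := hx.2.1 ⟨j, Finset.mem_insert_self j A⟩
              have h2 : z' v ⟨j, Finset.mem_insert_self j A⟩ = v := dif_neg hjA
              rw [h2] at h1
              exact h1
            subst hv
            rfl }
      rw [Nat.card_congr e, Nat.card_eq_fintype_card, Fintype.card_sigma]
      exact Finset.sum_congr rfl fun v _ => by rw [Nat.card_eq_fintype_card]
    have step : ∀ w : F,
        (∑ y : Y, p y * (Nat.card {x : Fin m → F // f x y = c ∧
            (∀ k : ↥A, x k.1 = z k) ∧ x i = w} : NNReal)) =
        ∑ v : F, ∑ y : Y, p y * (Nat.card {x : Fin m → F // f x y = c ∧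
            (∀ k : ↥B, x k.1 = z' v k) ∧ x i = w} : NNReal) := by
      intro w
      rw [Finset.sum_comm]
      refine Finset.sum_congr rfl fun y _ => ?_
      rw [hdecomp y w, Nat.cast_sum, Finset.mul_sum]
    rw [step a, step b]
    refine Finset.sum_congr rfl fun v _ => ?_
    exact hsec1 B hB i hiB c (z' v) a b
  have main : ∀ k s : ℕ, s + k = t →
      ∀ A : Finset (Fin m), A.card = s → ∀ i ∉ A, Secure p f A i := by
    intro k
    induction k with
    | zero => intro s hs; subst t; exact hsec
    | succ k ih =>
        intro s hs
        exact key s (by omega) (ih (s + 1) (by omega))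
  exact main (t - t') t' (by omega)
end

section
/- (Theorem 1, sufficiency.) Consider receivers with knowledge sets K_i ⊆ Fin m and want sets W_i ⊆ Fin m, let K_min = min_i |K_i| ≥ 1, let t < K_min, and set ℓ = m − K_min. Then over any finite field F with |F| ≥ m there exists a matrix G : Matrix (Fin m) (Fin ℓ) F such that the deterministic linear index code f x = x ᵥ* G is decodable for every receiver i and satisfies the security condition at (A, j) for every A ⊆ Fin m with |A| = t and every j ∉ A. Hence deterministic linear index codes secure against an eavesdropper with t-level access exist whenever t < K_min. -/
open Matrix

lemma vand_unit {m ℓ : ℕ} {F : Type*} [Field F] (α : Fin m ↪ F)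
    (S : Finset (Fin m)) (hS : S.card = ℓ) :
    ∃ e : Fin ℓ ≃ ↥S,
      IsUnit (Matrix.vandermonde (fun p => α ((e p : ↥S) : Fin m))) := by
  have hcard : Fintype.card ↥S = ℓ := by simp [hS]
  refine ⟨(Fintype.equivFinOfCardEq hcard).symm, ?_⟩
  rw [Matrix.isUnit_iff_isUnit_det, isUnit_iff_ne_zero,
    Matrix.det_vandermonde_ne_zero_iff]
  intro p q h
  have : ((Fintype.equivFinOfCardEq hcard).symm p : Fin m)
      = ((Fintype.equivFinOfCardEq hcard).symm q : Fin m) := α.injective h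
  have := Subtype.coe_injective this
  simpa using congrArg (Fintype.equivFinOfCardEq hcard) this

lemma supp_small_eq_zero {m ℓ : ℕ} {F : Type*} [Field F] (α : Fin m ↪ F)
    (hℓm : ℓ ≤ m) (v : Fin m → F)
    (hv : v ᵥ* (Matrix.of fun i (k : Fin ℓ) => α i ^ (k : ℕ)) = 0)
    (S : Finset (Fin m)) (hcard : S.card ≤ ℓ) (hsupp : ∀ i ∉ S, v i = 0) :
    v = 0 := by
  obtain ⟨S', hSS', -, hS'⟩ := Finset.exists_subsuperset_card_eq
    (Finset.subset_univ S) hcard (by simpa using hℓm)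
  obtain ⟨e, hM⟩ := vand_unit α S' hS'
  set M := Matrix.vandermonde (fun p => α ((e p : ↥S') : Fin m)) with hMdef
  have hsupp' : ∀ i ∉ S', v i = 0 := fun i hi => hsupp i (fun h => hi (hSS' h))
  have hw : (fun p => v ((e p : ↥S') : Fin m)) ᵥ* M = 0 := by
    funext q
    have h1 : ∑ p : Fin ℓ, v ((e p : ↥S') : Fin m) * α ((e p : ↥S') : Fin m) ^ (q : ℕ)
        = ∑ i ∈ S', v i * α i ^ (q : ℕ) := by
      rw [← Finset.sum_coe_sort S' (fun i => v i * α i ^ (q : ℕ))]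
      exact Fintype.sum_equiv e _ _ (fun p => rfl)
    have h2 : ∑ i ∈ S', v i * α i ^ (q : ℕ) = ∑ i : Fin m, v i * α i ^ (q : ℕ) :=
      Finset.sum_subset (Finset.subset_univ S')
        (fun x _ hx => by rw [hsupp' x hx, zero_mul])
    have h3 : (v ᵥ* (Matrix.of fun i (k : Fin ℓ) => α i ^ (k : ℕ))) q = 0 :=
      congrFun hv q
    simp only [Matrix.vecMul, dotProduct, Matrix.of_apply] at h3 ⊢
    simp only [hMdef, Matrix.vandermonde_apply, Pi.zero_apply]
    rw [h1, h2]
    exact h3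
  have hinj : Function.Injective M.vecMul := Matrix.vecMul_injective_iff_isUnit.mpr hM
  have hw0 : (fun p => v ((e p : ↥S') : Fin m)) = 0 := by
    apply hinj
    show Matrix.vecMul _ M = Matrix.vecMul 0 M
    rw [hw, Matrix.zero_vecMul]
  funext i
  by_cases hi : i ∈ S'
  · have := congrFun hw0 (e.symm ⟨i, hi⟩)
    simpa using this
  · exact hsupp' i hi

lemma exists_dual {m ℓ : ℕ} {F : Type*} [Field F] (α : Fin m ↪ F)
    (A : Finset (Fin m)) (j : Fin m) (hj : j ∉ A) (h : A.card + 1 + ℓ ≤ m) :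
    ∃ v : Fin m → F,
      v ᵥ* (Matrix.of fun i (k : Fin ℓ) => α i ^ (k : ℕ)) = 0 ∧
      (∀ i ∈ A, v i = 0) ∧ v j = 1 := by
  classical
  set B : Finset (Fin m) := insert j A with hB
  have hBcard : B.card = A.card + 1 := Finset.card_insert_of_notMem hj
  have hUc : ℓ ≤ Bᶜ.card := by
    rw [Finset.card_compl, hBcard]
    simp only [Fintype.card_fin]
    omega
  obtain ⟨U, hUB, hU⟩ := Finset.exists_subset_card_eq hUc
  obtain ⟨e, hM⟩ := vand_unit α U hU
  set M := Matrix.vandermonde (fun p => α ((e p : ↥U) : Fin m)) with hMdef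
  set r : Fin ℓ → F := fun q => α j ^ (q : ℕ) with hr
  set w : Fin ℓ → F := -(r ᵥ* M⁻¹) with hwdef
  have hBU : ∀ i ∈ B, i ∉ U := by
    intro i hi hiU
    have := hUB hiU
    simp only [Finset.mem_compl] at this
    exact this hi
  have hjU : j ∉ U := hBU j (Finset.mem_insert_self j A)
  set v : Fin m → F := fun i => if hij : i = j then 1 else
      if hiU : i ∈ U then w (e.symm ⟨i, hiU⟩) else 0 with hvdef
  have hvj : v j = 1 := by rw [hvdef]; simp
  have hvA : ∀ i ∈ A, v i = 0 := by
    intro i hiA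
    have hij : i ≠ j := fun hh => hj (hh ▸ hiA)
    have hiU : i ∉ U := hBU i (Finset.mem_insert_of_mem hiA)
    rw [hvdef]
    simp only [dif_neg hij, dif_neg hiU]
  refine ⟨v, ?_, hvA, hvj⟩
  funext q
  simp only [Matrix.vecMul, dotProduct, Matrix.of_apply, Pi.zero_apply]
  have hstep : ∑ x : Fin m, v x * α x ^ (q : ℕ)
      = ∑ x ∈ insert j U, v x * α x ^ (q : ℕ) := by
    refine (Finset.sum_subset (Finset.subset_univ _) ?_).symm
    intro x _ hx
    simp only [Finset.mem_insert, not_or] at hx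
    rw [hvdef]
    simp only [dif_neg hx.1, dif_neg hx.2, zero_mul]
  rw [hstep, Finset.sum_insert hjU]
  have hsumU : ∑ i ∈ U, v i * α i ^ (q : ℕ) = (w ᵥ* M) q := by
    simp only [Matrix.vecMul, dotProduct, hMdef, Matrix.vandermonde_apply]
    rw [← Finset.sum_coe_sort U (fun i => v i * α i ^ (q : ℕ))]
    refine (Fintype.sum_equiv e _ _ (fun p => ?_)).symm
    have hne : ((e p : ↥U) : Fin m) ≠ j := fun hh => hjU (hh ▸ (e p).2)
    rw [hvdef]
    simp only [dif_neg hne, dif_pos (e p).2]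
    congr 2
    simp
  rw [hsumU]
  have hMM : (w ᵥ* M) = -r := by
    rw [hwdef, Matrix.neg_vecMul, Matrix.vecMul_vecMul,
      Matrix.nonsing_inv_mul M (Matrix.isUnit_iff_isUnit_det M |>.mp hM),
      Matrix.vecMul_one]
  rw [hMM, hvj, one_mul]
  simp [hr]

/-- **Theorem 1 (sufficiency).** If `t < K_min = min_i |K_i|` (with `K_min ≥ 1`), then over
any finite field `F` with `|F| ≥ m` there is a matrix `G` of size `m × (m - K_min)` such
that the deterministic linear index code `x ↦ x ᵥ* G` is decodable for every receiver and
is secure against an eavesdropper with `t`-level access. -/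
theorem exists_secure_linear_index_code
    (m n t : ℕ) (K W : Fin n → Finset (Fin m))
    (Kmin : ℕ) (hKmin : IsLeast (Set.range fun i => (K i).card) Kmin)
    (hK1 : 1 ≤ Kmin) (ht : t < Kmin)
    (F : Type*) [Field F] [Fintype F] (hF : m ≤ Fintype.card F) :
    ∃ G : Matrix (Fin m) (Fin (m - Kmin)) F,
      (∀ i, DetDecodable (fun x => x ᵥ* G) (K i) (W i)) ∧
      (∀ A : Finset (Fin m), A.card = t → ∀ j ∉ A, DetSecure (fun x => x ᵥ* G) A j) := by
  classical
  obtain ⟨⟨i₀, hi₀⟩, hlb⟩ := hKmin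
  have hKm : Kmin ≤ m := by
    have h1 := Finset.card_le_univ (K i₀)
    simp only [Finset.card_univ, Fintype.card_fin] at h1
    simp only at hi₀
    omega
  obtain ⟨α⟩ : Nonempty (Fin m ↪ F) :=
    Function.Embedding.nonempty_of_card_le (by simpa using hF)
  set ℓ := m - Kmin with hℓ
  set G : Matrix (Fin m) (Fin ℓ) F := Matrix.of fun i (k : Fin ℓ) => α i ^ (k : ℕ)
    with hG
  have hℓm : ℓ ≤ m := Nat.sub_le m Kmin
  have hinj : ∀ (Ki : Finset (Fin m)), Kmin ≤ Ki.card →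
      ∀ x x' : Fin m → F, x ᵥ* G = x' ᵥ* G → (∀ k ∈ Ki, x k = x' k) → x = x' := by
    intro Ki hKi x x' hGx hk
    have h0 : (x - x') ᵥ* G = 0 := by rw [Matrix.sub_vecMul, hGx, sub_self]
    have hz := supp_small_eq_zero α hℓm (x - x') h0 Kiᶜ
      (by rw [Finset.card_compl]; simp only [Fintype.card_fin]; omega)
      (fun i hi => by
        simp only [Finset.mem_compl, not_not] at hi
        simp [hk i hi])
    funext i
    have := congrFun hz i
    simpa [sub_eq_zero] using this
  refine ⟨G, ?_, ?_⟩
  · intro i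
    have hKi : Kmin ≤ (K i).card := hlb ⟨i, rfl⟩
    refine ⟨fun c z jw =>
      if h : ∃ x : Fin m → F, x ᵥ* G = c ∧ ∀ k : ↥(K i), x k.1 = z k
      then h.choose jw.1 else 0, ?_⟩
    intro x
    have hx : ∃ x' : Fin m → F, x' ᵥ* G = (fun x => x ᵥ* G) x ∧
        ∀ k : ↥(K i), x' k.1 = x k.1 := ⟨x, rfl, fun k => rfl⟩
    funext jw
    simp only [dif_pos hx]
    have hs := hx.choose_spec
    have hxx : hx.choose = x := hinj (K i) hKi _ _ hs.1 (fun k hk => hs.2 ⟨k, hk⟩)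
    rw [hxx]
  · intro A hA j hjA c z a b
    obtain ⟨v, hv0, hvA, hvj⟩ := exists_dual (ℓ := ℓ) α A j hjA (by omega)
    have hmap : ∀ (a b : F)
        (x : {x : Fin m → F // (fun x => x ᵥ* G) x = c ∧
          (∀ j' : ↥A, x j'.1 = z j') ∧ x j = a}),
        ((x.1 + (b - a) • v) ᵥ* G = c ∧
          (∀ j' : ↥A, (x.1 + (b - a) • v) j'.1 = z j') ∧ (x.1 + (b - a) • v) j = b) := by
      intro a b x
      obtain ⟨hx1, hx2, hx3⟩ := x.2
      refine ⟨?_, ?_, ?_⟩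
      · rw [Matrix.add_vecMul, Matrix.smul_vecMul, hv0, smul_zero, add_zero]
        exact hx1
      · intro j'
        simp [hvA j'.1 j'.2, hx2 j']
      · simp [hvj, hx3]
    refine Nat.card_congr ⟨fun x => ⟨x.1 + (b - a) • v, hmap a b x⟩,
      fun x => ⟨x.1 + (a - b) • v, hmap b a x⟩, ?_, ?_⟩ <;>
    · intro x
      ext i
      simp only [add_assoc, ← add_smul, Pi.add_apply, Pi.smul_apply, smul_eq_mul]
      ring
end

section
/- (Theorem 1, necessity.) Consider receivers with knowledge sets K_i ⊆ Fin m and want sets W_i ⊆ Fin m satisfying W_i \ K_i ≠ ∅ for every i, let K_min = min_i |K_i|, and let t satisfy K_min ≤ t ≤ m − 1. Then no (deterministic or random) index code of any length, over any finite field and with any key alphabet and key pmf, is simultaneously decodable for all receivers and secure against an eavesdropper with t-level access (i.e., satisfies the security condition at (A, j) for all A ⊆ Fin m with |A| = t and all j ∉ A). -/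
open Matrix

/-- **Theorem 1 (necessity).** If every receiver wants something it does not know, and
`K_min ≤ t ≤ m - 1`, then no (deterministic or random) index code of any length, over any
finite field, with any key alphabet and key pmf, is simultaneously decodable for all
receivers and secure against an eavesdropper with `t`-level access. -/
theorem no_secure_code_of_t_ge_Kmin
    (m n t : ℕ) (K W : Fin n → Finset (Fin m))
    (hWK : ∀ i, (W i \ K i).Nonempty)
    (Kmin : ℕ) (hKmin : IsLeast (Set.range fun i => (K i).card) Kmin)
    (ht1 : Kmin ≤ t) (ht2 : t ≤ m - 1) (hm : 1 ≤ m)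
    (F : Type*) [Field F] [Fintype F] (ℓ : ℕ)
    (Y : Type*) [Fintype Y] (p : Y → NNReal) (hp : (∑ y : Y, p y) = 1)
    (f : (Fin m → F) → Y → (Fin ℓ → F)) :
    ¬ ((∀ i, Decodable f (K i) (W i)) ∧
       (∀ A : Finset (Fin m), A.card = t → ∀ j ∉ A, Secure p f A j)) := by
  rintro ⟨hdec, hsec⟩
  obtain ⟨⟨i₀, hi₀⟩, _⟩ := hKmin
  obtain ⟨i, hiWK⟩ := hWK i₀
  rw [Finset.mem_sdiff] at hiWK
  obtain ⟨hiW, hiK⟩ := hiWK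
  have hKcard : (K i₀).card = Kmin := hi₀
  have hsub : K i₀ ⊆ Finset.univ.erase i := fun j hj =>
    Finset.mem_erase.2 ⟨fun h => hiK (h ▸ hj), Finset.mem_univ j⟩
  have hcard : (Finset.univ.erase i).card = m - 1 := by
    simp [Finset.card_erase_of_mem]
  obtain ⟨A, hKA, hAsub, hAcard⟩ :=
    Finset.exists_subsuperset_card_eq (n := t - Kmin + (K i₀).card) hsub (by omega) (by rw [hKcard, hcard]; omega)
  have hAcard' : A.card = t := by rw [hAcard, hKcard]; omega
  have hiA : i ∉ A := fun h => (Finset.mem_erase.1 (hAsub h)).1 rfl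
  have hy : ∃ y, p y ≠ 0 := by
    by_contra h
    push_neg at h
    simp only [h, Finset.sum_const_zero] at hp
    exact zero_ne_one hp
  obtain ⟨y₀, hy₀⟩ := hy
  obtain ⟨g, hg⟩ := hdec i₀
  set x₀ : Fin m → F := fun _ => 0 with hx₀
  set c₀ : Fin ℓ → F := f x₀ y₀ with hc₀
  set z : ↥A → F := fun _ => (0 : F) with hz
  have hdet : ∀ (x : Fin m → F) (y : Y), f x y = c₀ → (∀ j : ↥A, x j.1 = 0) →
      x i = g c₀ (fun _ => 0) ⟨i, hiW⟩ := by
    intro x y hc hzx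
    have h1 := hg x y
    have h2 : (fun j : ↥(K i₀) => x j.1) = fun _ => (0 : F) :=
      funext fun j => hzx ⟨j.1, hKA j.2⟩
    rw [hc, h2] at h1
    exact (congrFun h1 ⟨i, hiW⟩).symm
  have hd0 : g c₀ (fun _ => (0 : F)) ⟨i, hiW⟩ = 0 :=
    (hdet x₀ y₀ rfl (fun _ => rfl)).symm
  have hempty : ∀ y : Y,
      Nat.card {x : Fin m → F // f x y = c₀ ∧ (∀ j : ↥A, x j.1 = z j) ∧ x i = 1} = 0 := by
    intro y
    refine Nat.card_eq_zero.2 (Or.inl ⟨?_⟩)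
    rintro ⟨x, hc, hzx, h1⟩
    have h0 : x i = 0 := by rw [hdet x y hc hzx, hd0]
    exact one_ne_zero (h1.symm.trans h0)
  have hs := hsec A hAcard' i hiA c₀ z 0 1
  have hrzero : (∑ y : Y, p y *
      (Nat.card {x : Fin m → F // f x y = c₀ ∧ (∀ j : ↥A, x j.1 = z j) ∧ x i = 1} : NNReal))
      = 0 := by
    refine Finset.sum_eq_zero fun y _ => ?_
    rw [hempty y]
    simp
  rw [hrzero] at hs
  have hterm := (Finset.sum_eq_zero_iff.1 hs) y₀ (Finset.mem_univ y₀)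
  rcases mul_eq_zero.1 hterm with h | h
  · exact hy₀ h
  · have hpos : 0 < Nat.card
        {x : Fin m → F // f x y₀ = c₀ ∧ (∀ j : ↥A, x j.1 = z j) ∧ x i = 0} := by
      haveI : Nonempty
          {x : Fin m → F // f x y₀ = c₀ ∧ (∀ j : ↥A, x j.1 = z j) ∧ x i = 0} :=
        ⟨⟨x₀, rfl, fun _ => rfl, rfl⟩⟩
      exact Nat.card_pos
    exact hpos.ne' (Nat.cast_eq_zero.1 h)
end

section
/- Let F be a field and let G : Matrix (Fin m) (Fin ℓ) F (ℓ ≤ m) be such that for every S ⊆ Fin m with |S| = ℓ the rows of G indexed by S are linearly independent. Then for every K ⊆ Fin m with |K| ≥ m − ℓ, the map x ↦ (x ᵥ* G, restriction of x to K) from (Fin m → F) is injective. In particular, a receiver knowing x|_K can recover all of x, so a decoder exists for any receiver (K, W) with |K| ≥ m − ℓ for the linear index code f x = x ᵥ* G. -/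
open Matrix

/-- **Decodability of the MDS-based linear code.** If every `ℓ` rows of
`G : Matrix (Fin m) (Fin ℓ) F` are linearly independent, then for every knowledge set `K`
with `|K| ≥ m - ℓ`, the map `x ↦ (x ᵥ* G, x|_K)` is injective; in particular, for every
want set `W` a decoder `g` exists for the linear index code `x ↦ x ᵥ* G`. -/
theorem mds_linear_code_decodable
    (m ℓ : ℕ) (hℓ : ℓ ≤ m) (F : Type*) [Field F]
    (G : Matrix (Fin m) (Fin ℓ) F)
    (hG : ∀ S : Finset (Fin m), S.card = ℓ →
      LinearIndependent F (fun j : ↥S => G j.1)) :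
    ∀ K : Finset (Fin m), m - ℓ ≤ K.card →
      (Function.Injective
          (fun x : Fin m → F => (x ᵥ* G, fun j : ↥K => x j.1)) ∧
        ∀ W : Finset (Fin m),
          ∃ g : (Fin ℓ → F) → (↥K → F) → (↥W → F),
            ∀ x : Fin m → F, g (x ᵥ* G) (fun j => x j.1) = fun j => x j.1) := by
  intro K hK
  have hinj : Function.Injective
      (fun x : Fin m → F => (x ᵥ* G, fun j : ↥K => x j.1)) := by
    intro x y h
    simp only [Prod.mk.injEq] at h
    obtain ⟨h1, h2⟩ := h
    set d := x - y with hd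
    have hdK : ∀ j ∈ K, d j = 0 := by
      intro j hj
      have := congrFun h2 ⟨j, hj⟩
      simp [hd, sub_eq_zero, this]
    -- Kᶜ ⊆ S with |S| = ℓ
    have hcard : Kᶜ.card ≤ ℓ := by
      have : Kᶜ.card = m - K.card := by
        simp [Finset.card_compl]
      omega
    obtain ⟨S, hKS, hScard⟩ := Finset.exists_superset_card_eq hcard (by simp [hℓ])
    have hdG : d ᵥ* G = 0 := by
      simp [hd, sub_vecMul, h1]
    have hsum : ∑ j : ↥S, d j.1 • G j.1 = 0 := by
      have : ∑ j : Fin m, d j • G j = 0 := by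
        funext k
        have := congrFun hdG k
        simpa [vecMul, dotProduct, Finset.sum_apply] using this
      rw [← this, Finset.sum_coe_sort S (fun j => d j • G j)]
      refine Finset.sum_subset (Finset.subset_univ S) fun j _ hjS => ?_
      have hjK : j ∈ K := by
        by_contra hjK
        exact hjS (hKS (Finset.mem_compl.mpr hjK))
      simp [hdK j hjK]
    have hli := hG S hScard
    rw [Fintype.linearIndependent_iff] at hli
    have hzeroS := hli (fun j => d j.1) hsum
    have hdz : ∀ j, d j = 0 := by
      intro j
      by_cases hj : j ∈ K
      · exact hdK j hj
      · exact hzeroS ⟨j, hKS (Finset.mem_compl.mpr hj)⟩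
    have : d = 0 := funext hdz
    have := sub_eq_zero.mp (by rw [← hd]; exact this)
    exact this
  refine ⟨hinj, fun W => ?_⟩
  classical
  refine ⟨fun c k => if h : ∃ x : Fin m → F, (x ᵥ* G, fun j : ↥K => x j.1) = (c, k)
      then fun j => h.choose j.1 else 0, fun x => ?_⟩
  have hex : ∃ y : Fin m → F, (y ᵥ* G, fun j : ↥K => y j.1)
      = (x ᵥ* G, fun j : ↥K => x j.1) := ⟨x, rfl⟩
  have hxy : hex.choose = x := hinj hex.choose_spec
  simp only [dif_pos hex, hxy]
end

section
/- Let F be a field, ℓ ≤ m, and let G : Matrix (Fin m) (Fin ℓ) F be such that every ℓ rows of G are linearly independent. Then for every A ⊆ Fin m with |A| ≤ m − ℓ − 1 and every i ∉ A, the standard basis vector e_i of (Fin m → F) does not belong to the linear span of the columns of G together with the set {e_j : j ∈ A}. (This is the linear-algebraic security of the MDS-based index code: an eavesdropper knowing x|_A and x ᵥ* G gains no information about x_i.) -/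
open Matrix

/-- **Linear-algebraic security of the MDS-based index code.** If every `ℓ` rows of
`G : Matrix (Fin m) (Fin ℓ) F` are linearly independent, then for every `A ⊆ Fin m` with
`|A| ≤ m - ℓ - 1` (i.e. `|A| + ℓ + 1 ≤ m`) and every `i ∉ A`, the standard basis vector
`e_i` does not lie in the span of the columns of `G` together with `{e_j : j ∈ A}`. -/
theorem mds_linear_code_secure_span
    (m ℓ : ℕ) (hℓ : ℓ ≤ m) (F : Type*) [Field F]
    (G : Matrix (Fin m) (Fin ℓ) F)
    (hG : ∀ S : Finset (Fin m), S.card = ℓ →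
      LinearIndependent F (fun j : ↥S => G j.1)) :
    ∀ A : Finset (Fin m), A.card + ℓ + 1 ≤ m → ∀ i ∉ A,
      (Pi.single i 1 : Fin m → F) ∉
        Submodule.span F
          ((Set.range fun k : Fin ℓ => fun j : Fin m => G j k) ∪
            ((fun j : Fin m => (Pi.single j 1 : Fin m → F)) '' ↑A)) := by
  intro A hA i hi h
  rw [Submodule.span_union, Submodule.mem_sup] at h
  obtain ⟨u, hu, w, hw, huw⟩ := h
  -- elements of the second span vanish off A
  set P : Submodule F (Fin m → F) :=
    { carrier := {v | ∀ j ∉ A, v j = 0}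
      add_mem' := fun h1 h2 j hj => by simp [h1 j hj, h2 j hj]
      zero_mem' := fun j _ => rfl
      smul_mem' := fun c v h1 j hj => by simp [h1 j hj] }
  have hwP : w ∈ P := by
    refine Submodule.span_le.mpr ?_ hw
    rintro _ ⟨j, hj, rfl⟩ j' hj'
    exact Pi.single_eq_of_ne (by rintro rfl; exact hj' hj) 1
  obtain ⟨a, ha⟩ := Submodule.mem_span_range_iff_exists_fun F |>.mp hu
  -- find ℓ coordinates outside A ∪ {i}
  have hcard : ℓ ≤ ((insert i A)ᶜ : Finset (Fin m)).card := by
    have : (insert i A).card ≤ A.card + 1 := Finset.card_insert_le _ _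
    have h2 := Finset.card_compl (insert i A)
    rw [Fintype.card_fin] at h2
    omega
  obtain ⟨S, hS, hScard⟩ := Finset.exists_subset_card_eq hcard
  -- the submatrix on rows S is invertible
  set e := S.orderIsoOfFin hScard
  set M : Matrix (Fin ℓ) (Fin ℓ) F := fun p k => G (e p) k with hM
  have hMrows : LinearIndependent F (fun p : Fin ℓ => M p) :=
    (hG S hScard).comp (fun p => e p) (fun p q hpq => by
      simpa using e.injective (Subtype.ext (congrArg Subtype.val hpq)))
  have hMunit : IsUnit M := linearIndependent_rows_iff_isUnit.mp hMrows
  -- u vanishes on S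
  have hu0 : ∀ p : Fin ℓ, u (e p) = 0 := by
    intro p
    have hmem : (e p : Fin m) ∈ (insert i A)ᶜ := hS (e p).2
    rw [Finset.mem_compl, Finset.mem_insert] at hmem
    push_neg at hmem
    have := congrFun huw (e p)
    have hw0 : w (e p) = 0 := hwP _ hmem.2
    have hsi : (Pi.single i 1 : Fin m → F) (e p) = 0 :=
      Pi.single_eq_of_ne hmem.1 1
    have h3 : u (e p) + w (e p) = (Pi.single i 1 : Fin m → F) (e p) := this
    rw [hw0, hsi, add_zero] at h3
    exact h3
  have hmv : M.mulVec a = 0 := by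
    funext p
    have := congrFun ha (e p)
    simp only [Finset.sum_apply, Pi.smul_apply, smul_eq_mul] at this
    rw [hu0 p] at this
    simpa [Matrix.mulVec, dotProduct, hM, mul_comm] using this
  have ha0 : a = 0 := by
    have := (mulVec_injective_iff_isUnit.mpr hMunit)
    have h0 : M.mulVec 0 = 0 := by simp
    exact this (hmv.trans h0.symm)
  -- then u = 0, contradicting u i = 1
  have hui : u i = 0 := by
    have := congrFun ha i
    simp only [Finset.sum_apply, Pi.smul_apply, smul_eq_mul, ha0, Pi.zero_apply,
      zero_mul, Finset.sum_const_zero] at this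
    exact this.symm
  have hwi : w i = 0 := hwP _ hi
  have := congrFun huw i
  simp only [Pi.add_apply, hui, hwi, Pi.single_eq_same] at this
  exact one_ne_zero (by rw [← this, add_zero])
end

section
/- Let F be a finite field with |F| ≥ 2, let G : Matrix (Fin m) (Fin ℓ) F, let f x = x ᵥ* G, let A ⊆ Fin m and i ∉ A. Then the security condition at (A, i) holds for f if and only if the standard basis vector e_i of (Fin m → F) does not belong to the linear span of the columns of G together with {e_j : j ∈ A}. -/
open Matrix

/-- **Security criterion for linear index codes.** For a finite field `F` (with `|F| ≥ 2`),
the deterministic linear index code `x ↦ x ᵥ* G` satisfies the (counting) security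
condition at `(A, i)` iff the standard basis vector `e_i` is not in the span of the
columns of `G` together with `{e_j : j ∈ A}`. -/
theorem linear_code_secure_iff_span
    (m ℓ : ℕ) (F : Type*) [Field F] [Fintype F] (hF : 2 ≤ Fintype.card F)
    (G : Matrix (Fin m) (Fin ℓ) F)
    (A : Finset (Fin m)) (i : Fin m) (hi : i ∉ A) :
    DetSecure (fun x => x ᵥ* G) A i ↔
      (Pi.single i 1 : Fin m → F) ∉
        Submodule.span F
          ((Set.range fun k : Fin ℓ => fun j : Fin m => G j k) ∪
            ((fun j : Fin m => (Pi.single j 1 : Fin m → F)) '' ↑A)) := by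
  classical
  set S : Set (Fin m → F) :=
    (Set.range fun k : Fin ℓ => fun j : Fin m => G j k) ∪
      ((fun j : Fin m => (Pi.single j 1 : Fin m → F)) '' ↑A) with hSdef
  constructor
  · intro hsec hmem
    -- every x in the "kernel" has x i = 0
    have hker : ∀ x : Fin m → F, x ᵥ* G = 0 → (∀ j ∈ A, x j = 0) → x i = 0 := by
      intro x hxG hxA
      let lx : (Fin m → F) →ₗ[F] F :=
        { toFun := fun v => ∑ j, x j * v j
          map_add' := by intro u v; simp [mul_add, Finset.sum_add_distrib]
          map_smul' := by intro t v; simp [Finset.mul_sum, mul_left_comm] }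
      have hle : Submodule.span F S ≤ LinearMap.ker lx := by
        rw [Submodule.span_le]
        rintro v (⟨k, rfl⟩ | ⟨j, hj, rfl⟩)
        · have := congrFun hxG k
          simp only [Matrix.vecMul, dotProduct, Pi.zero_apply] at this
          simpa [lx] using this
        · have : ∑ j', x j' * (Pi.single j 1 : Fin m → F) j' = x j := by
            simp [Pi.single_apply]
          simp only [SetLike.mem_coe, LinearMap.mem_ker, lx, LinearMap.coe_mk,
            AddHom.coe_mk]
          rw [this]
          exact hxA j hj
      have hmem' := hle hmem
      simp only [LinearMap.mem_ker] at hmem'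
      simp only [lx, LinearMap.coe_mk, AddHom.coe_mk] at hmem'
      have : ∑ j', x j' * (Pi.single i 1 : Fin m → F) j' = x i := by
        simp [Pi.single_apply]
      rwa [this] at hmem'
    have h1 := hsec 0 0 1 0
    have hempty : IsEmpty {x : Fin m → F //
        (fun x => x ᵥ* G) x = 0 ∧ (∀ j : ↥A, x j.1 = (0 : ↥A → F) j) ∧ x i = 1} := by
      refine ⟨fun ⟨x, hx1, hx2, hx3⟩ => ?_⟩
      have := hker x hx1 (fun j hj => hx2 ⟨j, hj⟩)
      exact one_ne_zero (hx3.symm.trans this)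
    have hpos : 0 < Nat.card {x : Fin m → F //
        (fun x => x ᵥ* G) x = 0 ∧ (∀ j : ↥A, x j.1 = (0 : ↥A → F) j) ∧ x i = 0} := by
      have : Nonempty {x : Fin m → F //
          (fun x => x ᵥ* G) x = 0 ∧ (∀ j : ↥A, x j.1 = (0 : ↥A → F) j) ∧ x i = 0} :=
        ⟨⟨0, by simp [Matrix.zero_vecMul]⟩⟩
      exact Nat.card_pos
    rw [← h1, Nat.card_of_isEmpty] at hpos
    exact lt_irrefl 0 hpos
  · intro hmem c z a b
    obtain ⟨φ, hφi, hφS⟩ := Submodule.exists_dual_map_eq_bot_of_notMem hmem inferInstance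
    set x0 : Fin m → F := fun j => φ (Pi.single j 1) with hx0def
    have hφeq : ∀ v : Fin m → F, φ v = ∑ j, v j * x0 j := by
      intro v
      conv_lhs => rw [pi_eq_sum_univ v]
      rw [map_sum]
      refine Finset.sum_congr rfl fun j _ => ?_
      rw [LinearMap.map_smul]
      have : (fun j' => if j = j' then (1:F) else 0) = (Pi.single j 1 : Fin m → F) := by
        funext j'; simp [Pi.single_apply, eq_comm]
      rw [this]
      simp [x0, smul_eq_mul]
    have hS0 : ∀ v ∈ Submodule.span F S, φ v = 0 := by
      intro v hv
      have : φ v ∈ Submodule.map φ (Submodule.span F S) := ⟨v, hv, rfl⟩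
      rw [hφS] at this
      exact (Submodule.mem_bot F).mp this
    have hx0i : x0 i ≠ 0 := hφi
    have hx0A : ∀ j ∈ A, x0 j = 0 := fun j hj =>
      hS0 _ (Submodule.subset_span (Or.inr ⟨j, hj, rfl⟩))
    have hx0G : x0 ᵥ* G = 0 := by
      funext k
      have h := hS0 (fun j => G j k) (Submodule.subset_span (Or.inl ⟨k, rfl⟩))
      rw [hφeq] at h
      simp only [Matrix.vecMul, dotProduct, Pi.zero_apply]
      rw [← h]
      exact Finset.sum_congr rfl fun j _ => mul_comm _ _
    set t : F := (b - a) / x0 i with htdef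
    have htx0 : t * x0 i = b - a := div_mul_cancel₀ _ hx0i
    apply Nat.card_congr
    refine ⟨fun x => ⟨x.1 + t • x0, ?_, fun j => ?_, ?_⟩,
            fun x => ⟨x.1 - t • x0, ?_, fun j => ?_, ?_⟩,
            fun x => Subtype.ext (by simp), fun x => Subtype.ext (by simp)⟩
    · simp [Matrix.add_vecMul, Matrix.smul_vecMul, hx0G, x.2.1]
    · have := x.2.2.1 j
      simp [hx0A j.1 j.2, this]
    · have := x.2.2.2
      simp only [Pi.add_apply, Pi.smul_apply, smul_eq_mul, this, htx0]
      ring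
    · simp [sub_eq_add_neg, Matrix.add_vecMul, Matrix.neg_vecMul, Matrix.smul_vecMul, hx0G,
        x.2.1]
    · have := x.2.2.1 j
      simp [hx0A j.1 j.2, this]
    · have := x.2.2.2
      simp only [Pi.sub_apply, Pi.smul_apply, smul_eq_mul, this, htx0]
      ring
end

section
/- (b-block security of the MDS scheme.) Let F be a field, ℓ ≤ m, and let G : Matrix (Fin m) (Fin ℓ) F be such that every ℓ rows of G are linearly independent. Let A, B ⊆ Fin m be disjoint with |A| + |B| ≤ m − ℓ. Then the intersection of the span of {e_j : j ∈ B} with the span of the columns of G together with {e_j : j ∈ A} is the zero subspace. (Hence an eavesdropper knowing x|_A and x ᵥ* G gains no information about any block x|_B of b = |B| unknown messages, provided t + b ≤ K_min where t = |A| and ℓ = m − K_min.) -/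
open Matrix

/-- Auxiliary: elements of the span of `{e_j : j ∈ C}` vanish outside `C`. -/
lemma mds_aux_supp {m : ℕ} {F : Type*} [Field F] (C : Finset (Fin m))
    {x : Fin m → F}
    (hx : x ∈ Submodule.span F ((fun j : Fin m => (Pi.single j 1 : Fin m → F)) '' ↑C)) :
    ∀ j ∉ C, x j = 0 := by
  induction hx using Submodule.span_induction with
  | mem v hv =>
    obtain ⟨j, hj, rfl⟩ := hv
    intro i hi
    exact Pi.single_eq_of_ne (by rintro rfl; exact hi hj) 1
  | zero => intro j hj; rfl
  | add a b _ _ ha hb => intro j hj; simp [ha j hj, hb j hj]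
  | smul r a _ ha => intro j hj; simp [ha j hj]

/-- **b-block security of the MDS scheme.** If every `ℓ` rows of `G` are linearly
independent and `A, B ⊆ Fin m` are disjoint with `|A| + |B| ≤ m - ℓ`
(i.e. `|A| + |B| + ℓ ≤ m`), then the span of `{e_j : j ∈ B}` intersects the span of the
columns of `G` together with `{e_j : j ∈ A}` trivially. -/
theorem mds_linear_code_block_secure
    (m ℓ : ℕ) (hℓ : ℓ ≤ m) (F : Type*) [Field F]
    (G : Matrix (Fin m) (Fin ℓ) F)
    (hG : ∀ S : Finset (Fin m), S.card = ℓ →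
      LinearIndependent F (fun j : ↥S => G j.1))
    (A B : Finset (Fin m)) (hAB : Disjoint A B)
    (hcard : A.card + B.card + ℓ ≤ m) :
    Submodule.span F ((fun j : Fin m => (Pi.single j 1 : Fin m → F)) '' ↑B) ⊓
      Submodule.span F
        ((Set.range fun k : Fin ℓ => fun j : Fin m => G j k) ∪
          ((fun j : Fin m => (Pi.single j 1 : Fin m → F)) '' ↑A)) = ⊥ := by
  rw [eq_bot_iff]
  rintro x ⟨hxB, hx2⟩
  rw [Submodule.span_union] at hx2
  rw [SetLike.mem_coe, Submodule.mem_sup] at hx2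
  obtain ⟨y, hy, z, hz, hx⟩ := hx2
  have hxB' := mds_aux_supp B hxB
  have hzA := mds_aux_supp A hz
  rw [Finsupp.mem_span_range_iff_exists_finsupp] at hy
  obtain ⟨c, hc⟩ := hy
  -- y vanishes off A ∪ B
  have hyAB : ∀ j ∉ A ∪ B, y j = 0 := by
    intro j hj
    have hjA : j ∉ A := fun h => hj (Finset.mem_union_left _ h)
    have hjB : j ∉ B := fun h => hj (Finset.mem_union_right _ h)
    have : y j = x j - z j := by rw [← hx]; simp
    rw [this, hxB' j hjB, hzA j hjA, sub_zero]
  -- pick S ⊆ (A ∪ B)ᶜ of size ℓ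
  obtain ⟨S, hSsub, hScard⟩ :
      ∃ S ⊆ (A ∪ B)ᶜ, S.card = ℓ := by
    apply Finset.exists_subset_card_eq
    have h1 : (A ∪ B).card ≤ A.card + B.card := Finset.card_union_le A B
    have h2 : (A ∪ B)ᶜ.card = m - (A ∪ B).card := by
      rw [Finset.card_compl, Fintype.card_fin]
    omega
  have li := hG S hScard
  have hne : Nonempty ↥S ∨ ℓ = 0 := by
    rcases Nat.eq_zero_or_pos ℓ with h0 | hpos
    · exact Or.inr h0
    · left
      rw [Finset.nonempty_coe_sort, ← Finset.card_pos, hScard]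
      exact hpos
  rcases hne with hne | h0
  swap
  · have hy0 : y = 0 := by
      subst h0
      rw [← hc]
      ext j
      simp [Finsupp.sum_fintype]
    have hxA : ∀ j ∉ A, x j = 0 := by
      intro j hj
      rw [← hx, hy0]
      simpa using hzA j hj
    ext j
    by_cases hj : j ∈ A
    · exact hxB' j (Finset.disjoint_left.mp hAB hj)
    · exact hxA j hj
  have hspan : Submodule.span F (Set.range fun j : ↥S => G j.1) = ⊤ := by
    apply li.span_eq_top_of_card_eq_finrank
    rw [Fintype.card_coe, hScard, Module.finrank_fintype_fun_eq_card, Fintype.card_fin]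
  -- the functional w ↦ ∑ k, c k * w k vanishes on the rows in S, hence is zero
  set φ : (Fin ℓ → F) →ₗ[F] F :=
    ∑ k, c k • (LinearMap.proj k : (Fin ℓ → F) →ₗ[F] F) with hφdef
  have hφapp : ∀ w : Fin ℓ → F, φ w = ∑ k, c k * w k := by
    intro w
    simp [hφdef, LinearMap.sum_apply]
  have hφzero : φ = 0 := by
    apply LinearMap.ext_on hspan
    rintro _ ⟨j, rfl⟩
    have hj : (j : Fin m) ∉ A ∪ B := by
      have := hSsub j.2; rwa [Finset.mem_compl] at this
    have hyj : y j.1 = ∑ k, c k * G j.1 k := by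
      rw [← hc]
      simp [Finsupp.sum_fintype, mul_comm]
    rw [LinearMap.zero_apply, hφapp, ← hyj, hyAB _ hj]
  have hc0 : ∀ k, c k = 0 := by
    intro k
    have := congrArg (fun f => f (Pi.single k 1 : Fin ℓ → F)) hφzero
    simpa [hφapp, Pi.single_apply, mul_comm] using this
  have hy0 : y = 0 := by
    rw [← hc]
    ext j
    simp [Finsupp.sum_fintype, hc0]
  -- hence x = z, supported on A and on B, which are disjoint
  have hxA : ∀ j ∉ A, x j = 0 := by
    intro j hj
    rw [← hx, hy0]
    simpa using hzA j hj
  ext j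
  by_cases hj : j ∈ A
  · exact hxB' j (Finset.disjoint_left.mp hAB hj)
  · exact hxA j hj
end

section
/- (Proposition 6, converse.) Suppose some receiver has knowledge set K and want set W with K ∪ W = Fin m (complementary message requests). Then for any finite field F, any nonempty key alphabet Y, and any random index code f : (Fin m → F) → Y → (Fin ℓ → F) admitting a decoder g with g (f x y) (x|_K) = x|_W for all x and all y, one has ℓ ≥ m − |K|. (Combined with the achievability of length m − K_min, this shows the optimal secure codelength equals m − K_min when A_max < K_min and a receiver with |K_i| = K_min has complementary requests.) -/
/-- **Proposition 6 (converse).** If a receiver has complementary message requests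
(`K ∪ W = Fin m`), then any random index code admitting a decoder for this receiver has
codelength `ℓ ≥ m - |K|`. -/
theorem codelength_lower_bound_of_complementary
    (m ℓ : ℕ) (K W : Finset (Fin m)) (hKW : K ∪ W = Finset.univ)
    (F : Type*) [Field F] [Fintype F]
    (Y : Type*) [Nonempty Y]
    (f : (Fin m → F) → Y → (Fin ℓ → F))
    (g : (Fin ℓ → F) → (↥K → F) → (↥W → F))
    (hg : ∀ (x : Fin m → F) (y : Y),
      g (f x y) (fun j => x j.1) = fun j => x j.1) :
    m - K.card ≤ ℓ := by
  obtain ⟨y⟩ := ‹Nonempty Y›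
  have hinj : Function.Injective
      (fun x : Fin m → F => (f x y, fun j : ↥K => x j.1)) := by
    intro x x' h
    have h1 : f x y = f x' y := (Prod.ext_iff.mp h).1
    have h2 : (fun j : ↥K => x j.1) = fun j : ↥K => x' j.1 :=
      (Prod.ext_iff.mp h).2
    have hW : (fun j : ↥W => x j.1) = fun j : ↥W => x' j.1 := by
      calc (fun j : ↥W => x j.1) = g (f x y) (fun j => x j.1) := (hg x y).symm
        _ = g (f x' y) (fun j => x' j.1) := by rw [h1, h2]
        _ = fun j : ↥W => x' j.1 := hg x' y
    funext i
    have hi : i ∈ K ∪ W := hKW ▸ Finset.mem_univ i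
    rcases Finset.mem_union.mp hi with hi | hi
    · exact congrFun h2 ⟨i, hi⟩
    · exact congrFun hW ⟨i, hi⟩
  have hcard := Fintype.card_le_of_injective _ hinj
  simp only [Fintype.card_fun, Fintype.card_fin, Fintype.card_prod,
    Fintype.card_coe, ← pow_add] at hcard
  have hq : 2 ≤ Fintype.card F := Fintype.one_lt_card
  have := (pow_le_pow_iff_right₀ hq).mp hcard
  omega
end

section
/- (Key claim underlying Proposition 7, after Neely–Tehrani–Zhang.) Consider receivers (K_i, W_i), i = 1,…,n, over Fin m. Define the directed-edge relation on the sum type (Fin n) ⊕ (Fin m): there is an edge from receiver vertex i to message vertex j iff j ∈ K_i, and from message vertex j to receiver vertex i iff j ∈ W_i. Assume (i) this relation has no directed cycle, i.e., no vertex v satisfies Relation.TransGen edge v v, and (ii) every message is wanted by some receiver: for all j ∈ Fin m there is i with j ∈ W_i. Then for any random index code f : (Fin m → F) → Y → (Fin ℓ → F) decodable for all receivers: for all x, x', y, y', f x y = f x' y' implies x = x'. (The codeword alone determines all messages.) -/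
/-- The directed bipartite relation on `(Fin n) ⊕ (Fin m)`: an edge from receiver vertex
`i` to message vertex `j` iff `j ∈ K i`, and from message vertex `j` to receiver vertex `i`
iff `j ∈ W i`. -/
def edgeRel {m n : ℕ} (K W : Fin n → Finset (Fin m)) :
    (Fin n ⊕ Fin m) → (Fin n ⊕ Fin m) → Prop :=
  fun v w =>
    match v, w with
    | Sum.inl i, Sum.inr j => j ∈ K i
    | Sum.inr j, Sum.inl i => j ∈ W i
    | _, _ => False

/-- **Key claim underlying Proposition 7 (after Neely–Tehrani–Zhang).** If the directed
bipartite side-information graph is acyclic and every message is wanted by some receiver,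
then for any random index code decodable for all receivers, the codeword alone determines
all messages. -/
theorem codeword_determines_messages_of_acyclic
    (m n ℓ : ℕ) (K W : Fin n → Finset (Fin m))
    (hacyc : ∀ v : Fin n ⊕ Fin m, ¬ Relation.TransGen (edgeRel K W) v v)
    (hwant : ∀ j : Fin m, ∃ i, j ∈ W i)
    (F : Type*) [Field F] [Fintype F] (Y : Type*)
    (f : (Fin m → F) → Y → (Fin ℓ → F))
    (hdec : ∀ i, Decodable f (K i) (W i)) :
    ∀ (x x' : Fin m → F) (y y' : Y), f x y = f x' y' → x = x' := by
  intro x x' y y' hf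
  have hwf : WellFounded (fun a b => Relation.TransGen (edgeRel K W) b a) := by
    have ht : IsTrans _ (fun a b => Relation.TransGen (edgeRel K W) b a) :=
      ⟨fun a b c hab hbc => hbc.trans hab⟩
    have hi : IsIrrefl _ (fun a b => Relation.TransGen (edgeRel K W) b a) :=
      ⟨fun a h => hacyc a h⟩
    exact Finite.wellFounded_of_trans_of_irrefl _
  have key : ∀ v : Fin n ⊕ Fin m, ∀ j : Fin m, v = Sum.inr j → x j = x' j := by
    refine fun v => hwf.induction (C := fun v => ∀ j : Fin m, v = Sum.inr j → x j = x' j) v ?_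
    intro v ih j hv
    subst hv
    obtain ⟨i, hi⟩ := hwant j
    obtain ⟨g, hg⟩ := hdec i
    have hK : (fun k : ↥(K i) => x k.1) = fun k : ↥(K i) => x' k.1 := by
      funext k
      refine ih (Sum.inr k.1) ?_ k.1 rfl
      exact Relation.TransGen.head (show edgeRel K W (Sum.inr j) (Sum.inl i) from hi)
        (Relation.TransGen.single (show edgeRel K W (Sum.inl i) (Sum.inr k.1) from k.2))
    have h1 := hg x y
    have h2 := hg x' y'
    rw [hf, hK] at h1
    have h3 : (fun j : ↥(W i) => x j.1) = fun j : ↥(W i) => x' j.1 := h1.symm.trans h2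
    exact congrFun h3 ⟨j, hi⟩
  funext j
  exact key (Sum.inr j) j rfl
end

section
/- (Proposition 7.) Consider receivers (K_i, W_i), i = 1,…,n, over Fin m, such that (i) the directed bipartite relation on (Fin n) ⊕ (Fin m) — edge from receiver i to message j iff j ∈ K_i, and from message j to receiver i iff j ∈ W_i — has no directed cycle, and (ii) every message is wanted by some receiver. Let 𝔄 contain some A with A ≠ Fin m. Then no (deterministic or random) weakly-secure index code exists: any random index code f (with any key alphabet Y and key pmf p) that is decodable for all receivers fails the security condition at (A, i) for every i ∉ A. -/
open Matrix

/-- **Proposition 7.** If the directed bipartite side-information graph is acyclic, every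
message is wanted by some receiver, and `𝔄` contains some `A ≠ Fin m`, then no
(deterministic or random) weakly-secure index code exists: any random index code (with any
key alphabet and key pmf) decodable for all receivers fails the security condition at
`(A, i)` for every `i ∉ A`. -/
theorem no_secure_code_of_acyclic
    (m n ℓ : ℕ) (K W : Fin n → Finset (Fin m))
    (hacyc : ∀ v : Fin n ⊕ Fin m, ¬ Relation.TransGen (edgeRel K W) v v)
    (hwant : ∀ j : Fin m, ∃ i, j ∈ W i)
    (𝔄 : Set (Finset (Fin m))) (A : Finset (Fin m)) (hA : A ∈ 𝔄)
    (hAne : A ≠ Finset.univ)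
    (F : Type*) [Field F] [Fintype F]
    (Y : Type*) [Fintype Y] (p : Y → NNReal) (hp : (∑ y : Y, p y) = 1)
    (f : (Fin m → F) → Y → (Fin ℓ → F))
    (hdec : ∀ i, Decodable f (K i) (W i)) :
    ∀ i ∉ A, ¬ Secure p f A i := by
  intro i hiA hsec
  -- The flipped transitive closure of the edge relation is well-founded.
  have hwf : WellFounded
      (fun a b : Fin n ⊕ Fin m => Relation.TransGen (edgeRel K W) b a) := by
    haveI : IsTrans (Fin n ⊕ Fin m)
        (fun a b => Relation.TransGen (edgeRel K W) b a) :=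
      ⟨fun _ _ _ h1 h2 => h2.trans h1⟩
    haveI : IsIrrefl (Fin n ⊕ Fin m)
        (fun a b => Relation.TransGen (edgeRel K W) b a) := ⟨hacyc⟩
    exact Finite.wellFounded_of_trans_of_irrefl _
  -- Injectivity: the codeword determines the whole message vector.
  have hinj : ∀ (x x' : Fin m → F) (y y' : Y), f x y = f x' y' → x = x' := by
    intro x x' y y' hf
    have key : ∀ v : Fin n ⊕ Fin m, ∀ j : Fin m, v = Sum.inr j → x j = x' j := by
      intro v
      induction v using hwf.induction with
      | _ v ih =>
        rintro j rfl
        obtain ⟨i', hi'⟩ := hwant j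
        obtain ⟨g, hg⟩ := hdec i'
        have hK : (fun k : ↥(K i') => x k.1) = fun k : ↥(K i') => x' k.1 := by
          funext k
          refine ih (Sum.inr k.1) ?_ k.1 rfl
          refine Relation.TransGen.head (b := Sum.inl i') hi' ?_
          exact Relation.TransGen.single k.2
        have h1 := hg x y
        have h2 := hg x' y'
        rw [hf, hK] at h1
        exact congrFun (h1.symm.trans h2) ⟨j, hi'⟩
    funext j
    exact key (Sum.inr j) j rfl
  -- Choose a key value with positive probability.
  obtain ⟨y₀, hy₀⟩ : ∃ y, p y ≠ 0 := by
    by_contra h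
    push_neg at h
    rw [Finset.sum_eq_zero (fun y _ => h y)] at hp
    exact one_ne_zero hp.symm
  set x₀ : Fin m → F := fun _ => 0 with hx₀
  have hsec' := hsec (f x₀ y₀) (fun j => x₀ j.1) (x₀ i) (x₀ i + 1)
  -- The right-hand side counts are all zero.
  have hRHS : ∀ y : Y, Nat.card {x : Fin m → F // f x y = f x₀ y₀ ∧
      (∀ j : ↥A, x j.1 = x₀ j.1) ∧ x i = x₀ i + 1} = 0 := by
    intro y
    rw [Nat.card_eq_zero]
    left
    refine ⟨fun ⟨x, hx1, _, hx3⟩ => ?_⟩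
    have := hinj x x₀ y y₀ hx1
    rw [this] at hx3
    exact one_ne_zero (left_eq_add.mp hx3)
  have h0 : (∑ y : Y, p y * (Nat.card {x : Fin m → F // f x y = f x₀ y₀ ∧
      (∀ j : ↥A, x j.1 = x₀ j.1) ∧ x i = x₀ i + 1} : NNReal)) = 0 :=
    Finset.sum_eq_zero (fun y _ => by rw [hRHS y]; simp)
  rw [h0] at hsec'
  -- But the left-hand side is positive.
  have hterm : p y₀ * (Nat.card {x : Fin m → F // f x y₀ = f x₀ y₀ ∧
      (∀ j : ↥A, x j.1 = x₀ j.1) ∧ x i = x₀ i} : NNReal) = 0 := by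
    have := (Finset.sum_eq_zero_iff.mp hsec') y₀ (Finset.mem_univ _)
    exact this
  rcases mul_eq_zero.mp hterm with h | h
  · exact hy₀ h
  · have hne : Nonempty {x : Fin m → F // f x y₀ = f x₀ y₀ ∧
        (∀ j : ↥A, x j.1 = x₀ j.1) ∧ x i = x₀ i} := ⟨⟨x₀, rfl, fun j => rfl, rfl⟩⟩
    have hpos : 0 < Nat.card {x : Fin m → F // f x y₀ = f x₀ y₀ ∧
        (∀ j : ↥A, x j.1 = x₀ j.1) ∧ x i = x₀ i} := Nat.card_pos
    have h' : Nat.card {x : Fin m → F // f x y₀ = f x₀ y₀ ∧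
        (∀ j : ↥A, x j.1 = x₀ j.1) ∧ x i = x₀ i} = 0 := by exact_mod_cast h
    exact absurd h' hpos.ne'
end

section
/- (Theorem 2.) Let F be a finite field, and let G : Matrix (Fin m) (Fin ℓ) F and G̃ : Matrix (Fin k) (Fin ℓ) F define the random linear index code f x y = x ᵥ* G + y ᵥ* G̃ with key y uniform over Fin k → F. Suppose f is decodable for every receiver (K_i, W_i), i = 1,…,n, and satisfies the security condition (with uniform key) at (A, j) for every A ∈ 𝔄 and every j ∉ A. Then there exists a matrix Ĝ : Matrix (Fin m) (Fin ℓ) F such that the deterministic linear index code x ↦ x ᵥ* Ĝ is decodable for every receiver and satisfies the security condition at (A, j) for every A ∈ 𝔄 and every j ∉ A. (Random keys do not help for linear index codes: random secure linear index codes of codelength ℓ exist iff deterministic secure linear index codes of codelength ℓ exist.) -/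
open Matrix

/-- Security condition at `(A, i)` for the random linear index code
`(x, y) ↦ x ᵥ* G + y ᵥ* G̃` with key `y` uniform over `Fin k → F` (counting form, over
pairs `(x, y)`). -/
def RandLinSecure {m ℓ k : ℕ} {F : Type*} [Field F]
    (G : Matrix (Fin m) (Fin ℓ) F) (Gt : Matrix (Fin k) (Fin ℓ) F)
    (A : Finset (Fin m)) (i : Fin m) : Prop :=
  ∀ (c : Fin ℓ → F) (z : ↥A → F) (a b : F),
    Nat.card {xy : (Fin m → F) × (Fin k → F) //
        xy.1 ᵥ* G + xy.2 ᵥ* Gt = c ∧ (∀ j : ↥A, xy.1 j.1 = z j) ∧ xy.1 i = a} =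
    Nat.card {xy : (Fin m → F) × (Fin k → F) //
        xy.1 ᵥ* G + xy.2 ᵥ* Gt = c ∧ (∀ j : ↥A, xy.1 j.1 = z j) ∧ xy.1 i = b}

/-- **Theorem 2.** Random keys do not help for linear index codes: if the random linear
index code `(x, y) ↦ x ᵥ* G + y ᵥ* G̃` (key uniform) is decodable for every receiver and
secure at `(A, j)` for every `A ∈ 𝔄` and `j ∉ A`, then there is a deterministic linear
index code `x ↦ x ᵥ* Ĝ` of the same codelength with the same properties. -/
theorem deterministic_linear_of_random_linear_secure
    (m ℓ k n : ℕ) (F : Type*) [Field F] [Fintype F]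
    (G : Matrix (Fin m) (Fin ℓ) F) (Gt : Matrix (Fin k) (Fin ℓ) F)
    (K W : Fin n → Finset (Fin m)) (𝔄 : Set (Finset (Fin m)))
    (hdec : ∀ i, Decodable (fun x (y : Fin k → F) => x ᵥ* G + y ᵥ* Gt) (K i) (W i))
    (hsec : ∀ A ∈ 𝔄, ∀ j ∉ A, RandLinSecure G Gt A j) :
    ∃ Ghat : Matrix (Fin m) (Fin ℓ) F,
      (∀ i, DetDecodable (fun x => x ᵥ* Ghat) (K i) (W i)) ∧
      (∀ A ∈ 𝔄, ∀ j ∉ A, DetSecure (fun x => x ᵥ* Ghat) A j) := by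
  classical
  set V := LinearMap.range (Matrix.vecMulLinear Gt) with hVdef
  obtain ⟨q, hq⟩ := Submodule.exists_isCompl V
  set π : (Fin ℓ → F) →ₗ[F] (Fin ℓ → F) :=
    q.subtype ∘ₗ Submodule.projectionOnto q V hq.symm with hπdef
  have hπq : ∀ u ∈ q, π u = u := by
    intro u hu
    have h := Submodule.projectionOnto_apply_left hq.symm ⟨u, hu⟩
    simp only [hπdef, LinearMap.comp_apply, Submodule.coe_subtype]
    rw [h]
  have hπV : ∀ v ∈ V, π v = 0 := by
    intro v hv
    have h := Submodule.projectionOnto_apply_of_mem_right hq.symm hv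
    simp only [hπdef, LinearMap.comp_apply, Submodule.coe_subtype]
    rw [h]; rfl
  have hπmem : ∀ w, π w ∈ q := fun w =>
    (Submodule.projectionOnto q V hq.symm w).2
  have hππ : ∀ w, π (π w) = π w := fun w => hπq _ (hπmem w)
  have hsub : ∀ w, w - π w ∈ V := by
    intro w
    have h := Submodule.projection_add_projection_eq_self hq w
    have h2 : (V.projectionOnto q hq w : Fin ℓ → F) = w - π w :=
      eq_sub_of_add_eq h
    rw [← h2]
    exact (V.projectionOnto q hq w).2
  have hrow : ∀ (M : Matrix (Fin m) (Fin ℓ) F) (x : Fin m → F),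
      x ᵥ* M = ∑ i, x i • M i := by
    intro M x
    funext jj
    simp [Matrix.vecMul, dotProduct, Finset.sum_apply]
  set Ghat : Matrix (Fin m) (Fin ℓ) F := Matrix.of (fun i => π (G i)) with hGdef
  have hGhat : ∀ x : Fin m → F, x ᵥ* Ghat = π (x ᵥ* G) := by
    intro x
    rw [hrow, hrow, map_sum]
    simp only [_root_.map_smul]
    rfl
  refine ⟨Ghat, ?_, ?_⟩
  · -- decodability
    intro i
    obtain ⟨g, hg⟩ := hdec i
    refine ⟨g, ?_⟩
    intro x
    have hv : π (x ᵥ* G) - x ᵥ* G ∈ V := by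
      have h := V.neg_mem (hsub (x ᵥ* G))
      rwa [neg_sub] at h
    obtain ⟨y, hy⟩ := hv
    rw [Matrix.vecMulLinear_apply] at hy
    have hx : x ᵥ* Ghat = x ᵥ* G + y ᵥ* Gt := by
      rw [hGhat, hy]; abel
    beta_reduce
    rw [hx]
    exact hg x y
  · -- security
    intro A hA j hj c z a b
    by_cases hc : π c = c
    · have hsec' := hsec A hA j hj c z a b
      set Kr := LinearMap.ker (Matrix.vecMulLinear Gt) with hKrdef
      have hN : 0 < Nat.card Kr := Nat.card_pos
      have hy0ex : ∀ x : Fin m → F, c - x ᵥ* G ∈ V → ∃ y : Fin k → F, y ᵥ* Gt = c - x ᵥ* G := by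
        intro x h
        obtain ⟨y, hy⟩ := h
        exact ⟨y, by rwa [Matrix.vecMulLinear_apply] at hy⟩
      set y0 : (Fin m → F) → (Fin k → F) :=
        fun x => if h : c - x ᵥ* G ∈ V then (hy0ex x h).choose else 0 with hy0def
      have hy0 : ∀ x : Fin m → F, c - x ᵥ* G ∈ V → y0 x ᵥ* Gt = c - x ᵥ* G := by
        intro x h
        simp only [hy0def, dif_pos h]
        exact (hy0ex x h).choose_spec
      have hmemV : ∀ (x : Fin m → F) (y : Fin k → F),
          x ᵥ* G + y ᵥ* Gt = c → c - x ᵥ* G ∈ V := by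
        intro x y hxy
        exact ⟨y, by rw [Matrix.vecMulLinear_apply]; exact eq_sub_of_add_eq' hxy⟩
      have hdet : ∀ (x : Fin m → F) (y : Fin k → F),
          x ᵥ* G + y ᵥ* Gt = c → x ᵥ* Ghat = c := by
        intro x y hxy
        rw [hGhat]
        have h1 : π (y ᵥ* Gt) = 0 :=
          hπV _ ⟨y, by rw [Matrix.vecMulLinear_apply]⟩
        have h2 := congrArg π hxy
        rw [map_add, h1, add_zero, hc] at h2
        exact h2
      have hdet' : ∀ x : Fin m → F, x ᵥ* Ghat = c → c - x ᵥ* G ∈ V := by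
        intro x hx
        rw [hGhat] at hx
        have h := V.neg_mem (hsub (x ᵥ* G))
        rw [neg_sub, hx] at h
        exact h
      have key : ∀ a' : F,
          Nat.card {xy : (Fin m → F) × (Fin k → F) //
              xy.1 ᵥ* G + xy.2 ᵥ* Gt = c ∧ (∀ j' : ↥A, xy.1 j'.1 = z j') ∧ xy.1 j = a'} =
          Nat.card {x : Fin m → F //
              x ᵥ* Ghat = c ∧ (∀ j' : ↥A, x j'.1 = z j') ∧ x j = a'} * Nat.card Kr := by
        intro a'
        rw [← Nat.card_prod]
        apply Nat.card_congr
        refine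
          { toFun := fun p =>
              (⟨p.1.1, hdet p.1.1 p.1.2 p.2.1, p.2.2.1, p.2.2.2⟩,
               ⟨p.1.2 - y0 p.1.1, ?_⟩),
            invFun := fun t =>
              ⟨(t.1.1, t.2.1 + y0 t.1.1), ?_, t.1.2.2.1, t.1.2.2.2⟩,
            left_inv := ?_, right_inv := ?_ }
        · rw [LinearMap.mem_ker, Matrix.vecMulLinear_apply, Matrix.sub_vecMul,
            hy0 _ (hmemV p.1.1 p.1.2 p.2.1), eq_sub_of_add_eq' p.2.1, sub_self]
        · rw [Matrix.add_vecMul, hy0 _ (hdet' t.1.1 t.1.2.1)]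
          have hk : (t.2 : Fin k → F) ᵥ* Gt = 0 := by
            have := t.2.2
            rwa [LinearMap.mem_ker, Matrix.vecMulLinear_apply] at this
          rw [hk]; abel
        · rintro ⟨⟨x, y⟩, h⟩
          simp [Subtype.ext_iff, Prod.ext_iff]
        · rintro ⟨⟨x, hx⟩, ⟨d, hd⟩⟩
          simp [Subtype.ext_iff, Prod.ext_iff]
      have h1 := key a
      have h2 := key b
      rw [h1, h2] at hsec'
      exact Nat.eq_of_mul_eq_mul_right hN hsec'
    · have hempty : ∀ a' : F, IsEmpty
          {x : Fin m → F // x ᵥ* Ghat = c ∧ (∀ j' : ↥A, x j'.1 = z j') ∧ x j = a'} := by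
        intro a'
        constructor
        rintro ⟨x, h1, _, _⟩
        apply hc
        rw [← h1, hGhat]
        exact hππ _
      have h1 := @Nat.card_of_isEmpty _ (hempty a)
      have h2 := @Nat.card_of_isEmpty _ (hempty b)
      exact h1.trans h2.symm
end

section
/- (Existence of linear decoders for random linear codes.) Let F be a field, G : Matrix (Fin m) (Fin ℓ) F, G̃ : Matrix (Fin k) (Fin ℓ) F, K ⊆ Fin m, and j ∈ Fin m. Suppose there exists a function g : (Fin ℓ → F) → ((K : Finset (Fin m)) → F) → F with g (x ᵥ* G + y ᵥ* G̃) (x|_K) = x j for all x : Fin m → F and y : Fin k → F. Then there exist vectors D : Fin ℓ → F and E : K → F such that x j = ⟨x ᵥ* G + y ᵥ* G̃, D⟩ + ⟨x|_K, E⟩ for all x and y, where ⟨·,·⟩ is the dot product; moreover, necessarily G̃ *ᵥ D = 0 (D lies in the nullspace of G̃). -/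
open Matrix

/-- **Existence of linear decoders for random linear codes.** If some (arbitrary) function
`g` recovers `x j` from `x ᵥ* G + y ᵥ* G̃` and `x|_K` for all `x, y`, then there are
vectors `D` and `E` with `x j = ⟨x ᵥ* G + y ᵥ* G̃, D⟩ + ⟨x|_K, E⟩` for all `x, y`;
moreover `D` necessarily lies in the nullspace of `G̃`, i.e. `G̃ *ᵥ D = 0`. -/
theorem exists_linear_decoder
    (m ℓ k : ℕ) (F : Type*) [Field F]
    (G : Matrix (Fin m) (Fin ℓ) F) (Gt : Matrix (Fin k) (Fin ℓ) F)
    (K : Finset (Fin m)) (j : Fin m)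
    (g : (Fin ℓ → F) → (↥K → F) → F)
    (hg : ∀ (x : Fin m → F) (y : Fin k → F),
      g (x ᵥ* G + y ᵥ* Gt) (fun t => x t.1) = x j) :
    ∃ (D : Fin ℓ → F) (E : ↥K → F),
      (∀ (x : Fin m → F) (y : Fin k → F),
        x j = (x ᵥ* G + y ᵥ* Gt) ⬝ᵥ D + ∑ t : ↥K, x t.1 * E t) ∧
      Gt *ᵥ D = 0 := by
  classical
  set L : ((Fin m → F) × (Fin k → F)) →ₗ[F] ((Fin ℓ → F) × (↥K → F)) :=
    LinearMap.prod
      ((Matrix.vecMulLinear G).comp (LinearMap.fst F _ _) +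
        (Matrix.vecMulLinear Gt).comp (LinearMap.snd F _ _))
      ((LinearMap.funLeft F F (Subtype.val : ↥K → Fin m)).comp (LinearMap.fst F _ _))
    with hL
  set f : ((Fin m → F) × (Fin k → F)) →ₗ[F] F :=
    (LinearMap.proj j).comp (LinearMap.fst F _ _) with hf
  have hLapp : ∀ v : (Fin m → F) × (Fin k → F),
      L v = (v.1 ᵥ* G + v.2 ᵥ* Gt, fun t => v.1 t.1) := by
    intro v
    simp [hL, Matrix.vecMulLinear_apply, LinearMap.funLeft]
    rfl
  have hker : LinearMap.ker L ≤ LinearMap.ker f := by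
    intro v hv
    rw [LinearMap.mem_ker] at hv ⊢
    have h1 : v.1 ᵥ* G + v.2 ᵥ* Gt = 0 := by
      have := congrArg Prod.fst (hLapp v ▸ hv); simpa using this
    have h2 : (fun t : ↥K => v.1 t.1) = 0 := by
      have := congrArg Prod.snd (hLapp v ▸ hv); simpa using this
    have e1 := hg v.1 v.2
    have e2 := hg (0 : Fin m → F) (0 : Fin k → F)
    simp only [Matrix.zero_vecMul, add_zero, Pi.zero_apply] at e2
    rw [h1] at e1
    rw [show (fun t : ↥K => v.1 t.1) = (fun _ : ↥K => (0 : F)) from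
      funext fun t => congrFun h2 t] at e1
    rw [e2] at e1
    simpa [hf] using e1.symm
  -- descend f to the quotient by ker L, transport to range L, and extend
  set fq := (LinearMap.ker L).liftQ f hker with hfq
  set e := L.quotKerEquivRange with he
  set fr : (LinearMap.range L) →ₗ[F] F := fq.comp e.symm.toLinearMap with hfr
  obtain ⟨h, hh⟩ := fr.exists_extend
  have hhL : ∀ v, h (L v) = f v := by
    intro v
    have hm : L v ∈ LinearMap.range L := ⟨v, rfl⟩
    have h1 : h (L v) = fr ⟨L v, hm⟩ := by
      have := congrFun (congrArg (fun (φ : (LinearMap.range L) →ₗ[F] F) => φ.toFun) hh)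
        ⟨L v, hm⟩
      simpa using this
    rw [h1, hfr]
    have h2 : e (Submodule.Quotient.mk v) = ⟨L v, hm⟩ :=
      Subtype.ext (L.quotKerEquivRange_apply_mk v)
    have h3 : e.symm ⟨L v, hm⟩ = Submodule.Quotient.mk v := by
      rw [← h2]; exact e.symm_apply_apply _
    simp [h3, hfq, Submodule.liftQ_apply]
  set D : Fin ℓ → F := fun t => h (Pi.single t 1, 0) with hD
  set E : ↥K → F := fun t => h (0, Pi.single t 1) with hE
  have hmain : ∀ (u : Fin ℓ → F) (v : ↥K → F),
      h (u, v) = u ⬝ᵥ D + ∑ t : ↥K, v t * E t := by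
    intro u v
    have hsplit : (u, v) = (∑ t : Fin ℓ, u t • ((Pi.single t 1 : Fin ℓ → F), (0 : ↥K → F)))
        + (∑ t : ↥K, v t • ((0 : Fin ℓ → F), (Pi.single t 1 : ↥K → F))) := by
      ext s
      · simp [Prod.fst_sum, Prod.snd_sum, Finset.sum_apply, Pi.single_apply,
          Finset.sum_ite_eq', mul_comm]
      · simp [Prod.fst_sum, Prod.snd_sum, Finset.sum_apply, Pi.single_apply,
          Finset.sum_ite_eq', mul_comm]
    rw [hsplit, map_add, map_sum, map_sum]
    simp only [_root_.map_smul, smul_eq_mul]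
    rfl
  refine ⟨D, E, ?_, ?_⟩
  · intro x y
    have := hhL (x, y)
    rw [hLapp (x, y)] at this
    rw [hmain] at this
    simpa [hf] using this.symm
  · -- Gt *ᵥ D = 0
    have key : ∀ (x : Fin m → F) (y : Fin k → F),
        x j = (x ᵥ* G + y ᵥ* Gt) ⬝ᵥ D + ∑ t : ↥K, x t.1 * E t := by
      intro x y
      have := hhL (x, y)
      rw [hLapp (x, y)] at this
      rw [hmain] at this
      simpa [hf] using this.symm
    funext i
    have := key (0 : Fin m → F) (Pi.single i 1)
    simp only [Pi.zero_apply, Matrix.zero_vecMul, zero_add, zero_mul,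
      Finset.sum_const_zero, add_zero] at this
    have hsv : (Pi.single i 1 : Fin k → F) ᵥ* Gt = Gt i := by
      funext t
      simp [Matrix.vecMul, dotProduct, Pi.single_apply]
    rw [hsv] at this
    have : (Gt *ᵥ D) i = 0 := by
      rw [Matrix.mulVec]; exact this.symm
    simpa using this
end

section
/- (Constructive core of Proposition 8.) Let A ⊆ Fin m, and consider receivers (K_i, W_i), i = 1,…,n, with W_i \ K_i ≠ ∅, such that for every receiver i it is NOT the case that K_i ⊆ A and W_i \ A ≠ ∅. Then over any finite field F with |F| ≥ m there exist a length ℓ ≤ m and a deterministic index code f : (Fin m → F) → (Fin ℓ → F) that is decodable for every receiver and satisfies the security condition at (A, j) for every j ∉ A. (The code reveals x|_A in the clear and protects x|_{A^c} with an MDS-based linear code.) -/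
open Matrix

lemma detDecodable_of_inj {m ℓ : ℕ} {F : Type*} [Field F]
    (f : (Fin m → F) → (Fin ℓ → F)) (K W : Finset (Fin m))
    (h : ∀ x x', f x = f x' → (∀ j ∈ K, x j = x' j) → ∀ j ∈ W, x j = x' j) :
    (∃ g : (Fin ℓ → F) → (↥K → F) → (↥W → F),
      ∀ x : Fin m → F, g (f x) (fun j => x j.1) = fun j => x j.1) := by
  classical
  refine ⟨fun c k =>
    if hx : ∃ x, f x = c ∧ (fun j : ↥K => x j.1) = k then fun j => hx.choose j.1
    else fun _ => 0, ?_⟩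
  intro x
  have hx : ∃ x', f x' = f x ∧ (fun j : ↥K => x' j.1) = fun j : ↥K => x j.1 := ⟨x, rfl, rfl⟩
  dsimp only
  rw [dif_pos hx]
  funext j
  exact h hx.choose x hx.choose_spec.1
    (fun j hj => congrFun hx.choose_spec.2 ⟨j, hj⟩) j.1 j.2

/-- **Constructive core of Proposition 8.** Suppose every receiver wants something it does
not know, and no receiver `i` satisfies `K i ⊆ A` and `W i \ A ≠ ∅`. Then over any finite
field `F` with `|F| ≥ m` there are a length `ℓ ≤ m` and a deterministic index code of
length `ℓ` that is decodable for every receiver and secure at `(A, j)` for every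
`j ∉ A`. -/
theorem exists_det_secure_code_single_eavesdropper_set
    (m n : ℕ) (A : Finset (Fin m)) (K W : Fin n → Finset (Fin m))
    (hWK : ∀ i, (W i \ K i).Nonempty)
    (htype : ∀ i, ¬ (K i ⊆ A ∧ (W i \ A).Nonempty))
    (F : Type*) [Field F] [Fintype F] (hF : m ≤ Fintype.card F) :
    ∃ ℓ : ℕ, ℓ ≤ m ∧
      ∃ f : (Fin m → F) → (Fin ℓ → F),
        (∀ i, DetDecodable f (K i) (W i)) ∧
        (∀ j ∉ A, DetSecure f A j) := by
  classical
  by_cases hA : ∀ i : Fin m, i ∈ A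
  · refine ⟨m, le_refl m, id, ?_, ?_⟩
    · intro i
      exact detDecodable_of_inj _ _ _ (fun x x' hxx _ j _ => congrFun hxx j)
    · intro j hj
      exact absurd (hA j) hj
  · push_neg at hA
    obtain ⟨k₀, hk₀⟩ := hA
    have hcard : Fintype.card {i : Fin m // i ≠ k₀} = m - 1 := by
      simp [Fintype.card_subtype_compl, Fintype.card_subtype_eq]
    let e : {i : Fin m // i ≠ k₀} ≃ Fin (m - 1) := Fintype.equivFinOfCardEq hcard
    set f : (Fin m → F) → (Fin (m - 1) → F) := fun x r =>
      if ((e.symm r : {i : Fin m // i ≠ k₀}) : Fin m) ∈ A then x (e.symm r)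
      else x (e.symm r) - x k₀ with hf
    have key : ∀ x x' : Fin m → F, f x = f x' → ∀ i : Fin m, i ≠ k₀ →
        (if i ∈ A then x i = x' i else x i - x k₀ = x' i - x' k₀) := by
      intro x x' hxx i hi
      have h1 := congrFun hxx (e ⟨i, hi⟩)
      simp only [hf, Equiv.symm_apply_apply] at h1
      by_cases hiA : i ∈ A
      · simpa [hiA] using h1
      · simpa [hiA] using h1
    refine ⟨m - 1, Nat.sub_le m 1, f, ?_, ?_⟩
    · intro i
      rcases not_and_or.mp (htype i) with hKA | hWA
      · -- receiver knows some k ∉ A; can reconstruct everything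
        rw [Finset.not_subset] at hKA
        obtain ⟨k, hkK, hkA⟩ := hKA
        apply detDecodable_of_inj
        intro x x' hxx hK j _
        have hk0 : x k₀ = x' k₀ := by
          by_cases hk : k = k₀
          · rw [← hk]; exact hK k hkK
          · have := key x x' hxx k hk
            rw [if_neg hkA] at this
            have hxk := hK k hkK
            linear_combination hxk - this
        by_cases hj : j = k₀
        · rw [hj]; exact hk0
        · have := key x x' hxx j hj
          by_cases hjA : j ∈ A
          · rwa [if_pos hjA] at this
          · rw [if_neg hjA] at this
            linear_combination this + hk0
      · -- W i ⊆ A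
        have hWA' : W i ⊆ A := by
          rw [Finset.not_nonempty_iff_eq_empty, Finset.sdiff_eq_empty_iff_subset] at hWA
          exact hWA
        apply detDecodable_of_inj
        intro x x' hxx _ j hjW
        have hjA : j ∈ A := hWA' hjW
        have hj : j ≠ k₀ := fun h => hk₀ (h ▸ hjA)
        have := key x x' hxx j hj
        rwa [if_pos hjA] at this
    · -- security
      intro j hjA c z a b
      set w : Fin m → F := fun i => if i ∈ A then 0 else b - a with hw
      have hfw : ∀ x : Fin m → F, f (fun i => x i + w i) = f x := by
        intro x
        funext r
        simp only [hf, hw]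
        by_cases hr : ((e.symm r : {i : Fin m // i ≠ k₀}) : Fin m) ∈ A
        · simp [hr]
        · simp [hr, hk₀]
      have hfw' : ∀ x : Fin m → F, f (fun i => x i - w i) = f x := by
        intro x
        funext r
        simp only [hf, hw]
        by_cases hr : ((e.symm r : {i : Fin m // i ≠ k₀}) : Fin m) ∈ A
        · simp [hr]
        · simp [hr, hk₀]
      apply Nat.card_congr
      refine ⟨fun x => ⟨fun i => x.1 i + w i, ?_, ?_, ?_⟩,
              fun x => ⟨fun i => x.1 i - w i, ?_, ?_, ?_⟩, ?_, ?_⟩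
      · rw [hfw]; exact x.2.1
      · intro jj
        have := x.2.2.1 jj
        simp [hw, jj.2, this]
      · have := x.2.2.2
        simp [hw, hjA, this]
      · rw [hfw']; exact x.2.1
      · intro jj
        have := x.2.2.1 jj
        simp [hw, jj.2, this]
      · have := x.2.2.2
        simp [hw, hjA, this]
      · intro x; ext i; simp
      · intro x; ext i; simp
end

section
/- (Proposition 8.) Let the eavesdropper have access to exactly one message subset: 𝔄 = {A} for a single A ⊆ Fin m. Consider receivers (K_i, W_i), i = 1,…,n, with W_i \ K_i ≠ ∅. If over some finite field F and some finite key alphabet Y with key pmf p there exists a random index code decodable for all receivers and satisfying the security condition at (A, j) for every j ∉ A, then over some finite field there exists a deterministic index code decodable for all receivers and satisfying the security condition at (A, j) for every j ∉ A. (When |𝔄| = 1, random keys do not help: random secure index codes exist iff deterministic secure index codes exist.) -/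
open Matrix

/-- **Proposition 8.** When the eavesdropper can access exactly one message subset
(`𝔄 = {A}`), random keys do not help: if over some finite field, with some finite key
alphabet and key pmf, there is a random index code decodable for all receivers and secure
at `(A, j)` for every `j ∉ A`, then over some finite field there is a deterministic index
code decodable for all receivers and secure at `(A, j)` for every `j ∉ A`. -/
theorem deterministic_of_random_secure_single_set
    (m n : ℕ) (A : Finset (Fin m)) (K W : Fin n → Finset (Fin m))
    (hWK : ∀ i, (W i \ K i).Nonempty)
    (F : Type) [Field F] [Fintype F] (ℓ : ℕ)
    (Y : Type) [Fintype Y] (p : Y → NNReal) (hp : (∑ y : Y, p y) = 1)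
    (f : (Fin m → F) → Y → (Fin ℓ → F))
    (hdec : ∀ i, Decodable f (K i) (W i))
    (hsec : ∀ j ∉ A, Secure p f A j) :
    ∃ (F' : Type) (_ : Field F') (_ : Fintype F') (ℓ' : ℕ)
      (f' : (Fin m → F') → (Fin ℓ' → F')),
      (∀ i, DetDecodable f' (K i) (W i)) ∧
      (∀ j ∉ A, DetSecure f' A j) := by
  classical
  -- a key value with positive probability
  obtain ⟨y₀, hy₀⟩ : ∃ y : Y, p y ≠ 0 := by
    by_contra h
    push_neg at h
    simp [h] at hp
  -- Step 1: if a receiver wants something outside A, it must know something outside A.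
  have key : ∀ i : Fin n, ¬ W i ⊆ A → ∃ k ∈ K i, k ∉ A := by
    intro i hWA
    by_contra hK
    push_neg at hK
    obtain ⟨j, hjW, hjA⟩ := Finset.not_subset.mp hWA
    obtain ⟨g, hg⟩ := hdec i
    obtain ⟨a, b, hab⟩ := exists_pair_ne F
    set x₀ : Fin m → F := fun _ => a with hx₀
    have hsj := hsec j hjA (f x₀ y₀) (fun t => x₀ t.1) a b
    have hemp : ∀ y : Y,
        Nat.card {x : Fin m → F // f x y = f x₀ y₀ ∧
          (∀ t : ↥A, x t.1 = (fun t : ↥A => x₀ t.1) t) ∧ x j = b} = 0 := by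
      intro y
      have : IsEmpty {x : Fin m → F // f x y = f x₀ y₀ ∧
          (∀ t : ↥A, x t.1 = (fun t : ↥A => x₀ t.1) t) ∧ x j = b} := by
        constructor
        rintro ⟨x, hc, hz, hxb⟩
        have hK' : (fun t : ↥(K i) => x t.1) = (fun t : ↥(K i) => x₀ t.1) := by
          funext t
          exact hz ⟨t.1, hK t.1 t.2⟩
        have h1 := congrFun (hg x y) ⟨j, hjW⟩
        have h2 := congrFun (hg x₀ y₀) ⟨j, hjW⟩
        rw [hc, hK'] at h1
        have : b = a := by rw [← hxb, ← h1, h2]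
        exact hab this.symm
      exact Nat.card_of_isEmpty
    have hR : (∑ y : Y, p y * (Nat.card {x : Fin m → F // f x y = f x₀ y₀ ∧
        (∀ t : ↥A, x t.1 = (fun t : ↥A => x₀ t.1) t) ∧ x j = b} : NNReal)) = 0 := by
      apply Finset.sum_eq_zero
      intro y _
      rw [hemp y]
      simp
    rw [hR] at hsj
    have h0 := (Finset.sum_eq_zero_iff.mp hsj) y₀ (Finset.mem_univ _)
    rcases mul_eq_zero.mp h0 with h | h
    · exact hy₀ h
    · rw [Nat.cast_eq_zero] at h
      haveI : Nonempty {x : Fin m → F // f x y₀ = f x₀ y₀ ∧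
          (∀ t : ↥A, x t.1 = (fun t : ↥A => x₀ t.1) t) ∧ x j = a} :=
        ⟨⟨x₀, rfl, fun t => rfl, rfl⟩⟩
      have hpos := Nat.card_pos (α := {x : Fin m → F // f x y₀ = f x₀ y₀ ∧
          (∀ t : ↥A, x t.1 = (fun t : ↥A => x₀ t.1) t) ∧ x j = a})
      exact absurd h hpos.ne'
  by_cases hB : ∃ b : Fin m, b ∉ A
  · obtain ⟨b₀, hb₀⟩ := hB
    refine ⟨F, inferInstance, inferInstance, m,
      (fun x t => if t ∈ A then x t else x t - x b₀), ?_, ?_⟩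
    · -- decodability
      intro i
      by_cases hWA : W i ⊆ A
      · refine ⟨fun c _ j => c j.1, ?_⟩
        intro x
        funext j
        have hj : j.1 ∈ A := hWA j.2
        simp [hj]
      · obtain ⟨k₀, hk₀K, hk₀A⟩ := key i hWA
        refine ⟨fun c k j => if j.1 ∈ A then c j.1 else
          c j.1 + (k ⟨k₀, hk₀K⟩ - c k₀), ?_⟩
        intro x
        funext j
        by_cases hj : j.1 ∈ A
        · simp [hj]
        · simp only [if_neg hj, if_neg hk₀A]
          ring
    · -- security
      intro j hjA c z a b
      apply Nat.card_congr
      refine ⟨fun x => ⟨fun t => if t ∈ A then x.1 t else x.1 t + (b - a), ?_, ?_, ?_⟩,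
              fun x => ⟨fun t => if t ∈ A then x.1 t else x.1 t + (a - b), ?_, ?_, ?_⟩,
              ?_, ?_⟩
      · obtain ⟨x, hc, hz, hxa⟩ := x
        funext t
        have h : (if t ∈ A then x t else x t - x b₀) = c t := congrFun hc t
        by_cases ht : t ∈ A
        · simpa [ht] using h
        · rw [if_neg ht] at h
          simp only [if_neg ht, if_neg hb₀]
          rw [← h]; ring
      · obtain ⟨x, hc, hz, hxa⟩ := x
        intro t
        simpa [t.2] using hz t
      · obtain ⟨x, hc, hz, hxa⟩ := x
        simp only [if_neg hjA]
        rw [hxa]; ring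
      · obtain ⟨x, hc, hz, hxa⟩ := x
        funext t
        have h : (if t ∈ A then x t else x t - x b₀) = c t := congrFun hc t
        by_cases ht : t ∈ A
        · simpa [ht] using h
        · rw [if_neg ht] at h
          simp only [if_neg ht, if_neg hb₀]
          rw [← h]; ring
      · obtain ⟨x, hc, hz, hxa⟩ := x
        intro t
        simpa [t.2] using hz t
      · obtain ⟨x, hc, hz, hxa⟩ := x
        simp only [if_neg hjA]
        rw [hxa]; ring
      · intro x
        apply Subtype.ext
        funext t
        by_cases ht : t ∈ A <;> simp [ht] <;> ring
      · intro x
        apply Subtype.ext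
        funext t
        by_cases ht : t ∈ A <;> simp [ht] <;> ring
  · -- A = univ : identity code, security is vacuous
    refine ⟨F, inferInstance, inferInstance, m, (fun x => x), ?_, ?_⟩
    · intro i
      exact ⟨fun c _ j => c j.1, fun x => rfl⟩
    · intro j hj
      exact absurd ⟨j, hj⟩ hB
end

section
/- (Proposition 1, first code.) Let F be a finite field with |F| ≥ 2 and m = 4. The deterministic index code f x = (x₀ + x₁, x₂ + x₃) of length 2 satisfies the security condition at (A, i) for A = {2, 3} and each i ∈ {0, 1}, but fails the security condition at (A', 3) for A' = {2}: indeed x₃ is a function of f x and x₂. (An index code secure against an eavesdropper knowing X_A need not be secure against one knowing X_{A'} with A' ⊊ A.) -/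
open Matrix

open scoped Classical in
lemma count0 (F : Type*) [Field F] (c : Fin 2 → F)
    (z : ↥({2,3} : Finset (Fin 4)) → F) (a : F) :
    Nat.card {x : Fin 4 → F // ![x 0 + x 1, x 2 + x 3] = c ∧
      (∀ j : ↥({2,3} : Finset (Fin 4)), x j.1 = z j) ∧ x 0 = a} =
    if z ⟨2, by decide⟩ + z ⟨3, by decide⟩ = c 1 then 1 else 0 := by
  by_cases h : z ⟨2, by decide⟩ + z ⟨3, by decide⟩ = c 1
  · rw [if_pos h, Nat.card_eq_one_iff_unique]
    constructor
    · constructor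
      rintro ⟨x, hx1, hx2, hx3⟩ ⟨y, hy1, hy2, hy3⟩
      have hx0 := congrFun hx1 0
      have hy0 := congrFun hy1 0
      simp only [Matrix.cons_val_zero] at hx0 hy0
      apply Subtype.ext; funext j; fin_cases j
      · simp [hx3, hy3]
      · have : x 1 = c 0 - x 0 := by linear_combination hx0
        have h2 : y 1 = c 0 - y 0 := by linear_combination hy0
        simp [this, h2, hx3, hy3]
      · simp [hx2 ⟨2, by decide⟩, hy2 ⟨2, by decide⟩]
      · simp [hx2 ⟨3, by decide⟩, hy2 ⟨3, by decide⟩]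
    · refine ⟨⟨![a, c 0 - a, z ⟨2, by decide⟩, z ⟨3, by decide⟩], ?_, ?_, rfl⟩⟩
      · funext j; fin_cases j
        · simp
        · simpa using h
      · rintro ⟨j, hj⟩
        fin_cases hj <;> simp
  · rw [if_neg h, Nat.card_eq_zero]
    left; constructor
    rintro ⟨x, hx1, hx2, hx3⟩
    apply h
    have := congrFun hx1 1
    simp only [Matrix.cons_val_one, Matrix.head_cons] at this
    rw [hx2 ⟨2, by decide⟩, hx2 ⟨3, by decide⟩] at this
    exact this

open scoped Classical in
lemma count1 (F : Type*) [Field F] (c : Fin 2 → F)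
    (z : ↥({2,3} : Finset (Fin 4)) → F) (a : F) :
    Nat.card {x : Fin 4 → F // ![x 0 + x 1, x 2 + x 3] = c ∧
      (∀ j : ↥({2,3} : Finset (Fin 4)), x j.1 = z j) ∧ x 1 = a} =
    if z ⟨2, by decide⟩ + z ⟨3, by decide⟩ = c 1 then 1 else 0 := by
  by_cases h : z ⟨2, by decide⟩ + z ⟨3, by decide⟩ = c 1
  · rw [if_pos h, Nat.card_eq_one_iff_unique]
    constructor
    · constructor
      rintro ⟨x, hx1, hx2, hx3⟩ ⟨y, hy1, hy2, hy3⟩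
      have hx0 := congrFun hx1 0
      have hy0 := congrFun hy1 0
      simp only [Matrix.cons_val_zero] at hx0 hy0
      apply Subtype.ext; funext j; fin_cases j
      · have : x 0 = c 0 - x 1 := by linear_combination hx0
        have h2 : y 0 = c 0 - y 1 := by linear_combination hy0
        simp [this, h2, hx3, hy3]
      · simp [hx3, hy3]
      · simp [hx2 ⟨2, by decide⟩, hy2 ⟨2, by decide⟩]
      · simp [hx2 ⟨3, by decide⟩, hy2 ⟨3, by decide⟩]
    · refine ⟨⟨![c 0 - a, a, z ⟨2, by decide⟩, z ⟨3, by decide⟩], ?_, ?_, rfl⟩⟩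
      · funext j; fin_cases j
        · simp
        · simpa using h
      · rintro ⟨j, hj⟩
        fin_cases hj <;> simp
  · rw [if_neg h, Nat.card_eq_zero]
    left; constructor
    rintro ⟨x, hx1, hx2, hx3⟩
    apply h
    have := congrFun hx1 1
    simp only [Matrix.cons_val_one, Matrix.head_cons] at this
    rw [hx2 ⟨2, by decide⟩, hx2 ⟨3, by decide⟩] at this
    exact this

/-- **Proposition 1 (first code).** The code `f x = (x₀ + x₁, x₂ + x₃)` on four messages
is secure at `({2, 3}, i)` for `i ∈ {0, 1}`, but insecure at `({2}, 3)`: indeed `x₃` is a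
function of `f x` and `x₂`. -/
theorem proposition1_first_code
    (F : Type*) [Field F] [Fintype F] (hF : 2 ≤ Fintype.card F) :
    let f : (Fin 4 → F) → (Fin 2 → F) := fun x => ![x 0 + x 1, x 2 + x 3]
    (∀ i ∈ ({0, 1} : Finset (Fin 4)), DetSecure f ({2, 3} : Finset (Fin 4)) i) ∧
    ¬ DetSecure f ({2} : Finset (Fin 4)) 3 ∧
    (∀ x x' : Fin 4 → F, f x = f x' → x 2 = x' 2 → x 3 = x' 3) := by
  intro f
  refine ⟨?_, ?_, ?_⟩
  · intro i hi
    fin_cases hi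
    · intro c z a b
      exact (count0 F c z a).trans (count0 F c z b).symm
    · intro c z a b
      exact (count1 F c z a).trans (count1 F c z b).symm
  · intro h
    obtain ⟨b, hb⟩ := Fintype.exists_ne_of_one_lt_card hF 0
    have := h ![0, 0] (fun _ => 0) 0 b
    have hL : 0 < Nat.card {x : Fin 4 → F // f x = ![0, 0] ∧
        (∀ j : ↥({2} : Finset (Fin 4)), x j.1 = (fun _ => (0 : F)) j) ∧ x 3 = 0} := by
      haveI : Nonempty {x : Fin 4 → F // f x = ![0, 0] ∧
          (∀ j : ↥({2} : Finset (Fin 4)), x j.1 = (fun _ => (0 : F)) j) ∧ x 3 = 0} := by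
        refine ⟨⟨fun _ => 0, ?_, fun j => rfl, rfl⟩⟩
        funext j; fin_cases j <;> simp [f]
      exact Nat.card_pos
    have hR : Nat.card {x : Fin 4 → F // f x = ![0, 0] ∧
        (∀ j : ↥({2} : Finset (Fin 4)), x j.1 = (fun _ => (0 : F)) j) ∧ x 3 = b} = 0 := by
      rw [Nat.card_eq_zero]
      left; constructor
      rintro ⟨x, hx1, hx2, hx3⟩
      apply hb
      have h1 := congrFun hx1 1
      simp only [f, Matrix.cons_val_one, Matrix.head_cons, Matrix.cons_val_zero] at h1
      have h2 := hx2 ⟨2, by decide⟩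
      simp only at h2
      rw [h2, hx3] at h1
      linear_combination h1
    rw [this, hR] at hL
    exact lt_irrefl 0 hL
  · intro x x' hf h2
    have h1 := congrFun hf 1
    simp only [f, Matrix.cons_val_one, Matrix.head_cons, Matrix.cons_val_zero] at h1
    linear_combination h1 - h2
end
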